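/- arXiv:1905.01130 — 7 statements merged into one kernel-verified Lean document; each statement's English description precedes it below -/
import Mathlib

section
/- Let [X,d,m] be a metric random walk space with an invariant and reversible σ-finite measure ν. For every u ∈ L¹(X,ν), writing E_t(u) := {x ∈ X : u(x) > t} for t ∈ ℝ, the coarea formula holds: TV_m(u) = ∫_{−∞}^{+∞} P_m(E_t(u)) dt. -/
open MeasureTheory ENNReal Filter Set Topology

noncomputable section

variable {X : Type*} [MeasurableSpace X]

/-- The double integral `∫∫ |u(y) − u(x)| dm_x(y) dν(x)`. -/
def nlEnergy (m : X → Measure X) (ν : Measure X) (u : X → ℝ) : ℝ≥0∞ :=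
  ∫⁻ x, ∫⁻ y, ENNReal.ofReal |u y - u x| ∂(m x) ∂ν

/-- The `m`-total variation `TV_m(u) = (1/2) ∫∫ |u(y) − u(x)| dm_x(y) dν(x)`. -/
def TVm (m : X → Measure X) (ν : Measure X) (u : X → ℝ) : ℝ≥0∞ :=
  2⁻¹ * nlEnergy m ν u

/-- `u ∈ BV_m(X,ν)`: a measurable function with finite nonlocal energy. -/
def MemBVm (m : X → Measure X) (ν : Measure X) (u : X → ℝ) : Prop :=
  Measurable u ∧ nlEnergy m ν u < ⊤

/-- `u ∈ BV_m^0(X,ν)`: `u ∈ BV_m(X,ν)` vanishing a.e. outside a set `A` with `0 < ν A < ν X`. -/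
def MemBVm0 (m : X → Measure X) (ν : Measure X) (u : X → ℝ) : Prop :=
  MemBVm m ν u ∧ ∃ A : Set X, MeasurableSet A ∧ 0 < ν A ∧ ν A < ν Set.univ ∧
    ∀ᵐ x ∂ν, x ∉ A → u x = 0

/-- The `m`-interaction `L_m(A,B) = ∫_A m_x(B) dν(x)`. -/
def Lm (m : X → Measure X) (ν : Measure X) (A B : Set X) : ℝ≥0∞ :=
  ∫⁻ x in A, m x B ∂ν

/-- The `m`-perimeter `P_m(E) = L_m(E, X∖E)`. -/
def Pm (m : X → Measure X) (ν : Measure X) (E : Set X) : ℝ≥0∞ :=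
  Lm m ν E Eᶜ

/-- `ν` is invariant and reversible for `m`. -/
def Reversible (m : X → Measure X) (ν : Measure X) : Prop :=
  ∀ F : X → X → ℝ≥0∞, Measurable (Function.uncurry F) →
    ∫⁻ x, ∫⁻ y, F x y ∂(m x) ∂ν = ∫⁻ y, ∫⁻ x, F x y ∂(m y) ∂ν

/-- `x ↦ m_x(A)` is measurable for every Borel set `A`. -/
def MeasurableKernel (m : X → Measure X) : Prop :=
  ∀ A : Set X, MeasurableSet A → Measurable fun x => m x A

/-- The measure `ν ⊗ m_x` on `X × X`, given by `(ν ⊗ m_x)(U) = ∫ m_x(U_x) dν(x)`. -/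
def nuOtimes (m : X → Measure X) (ν : Measure X) : Measure (X × X) :=
  ν.bind fun x => (m x).map (Prod.mk x)

/-- The `m`-divergence `div_m z (x) = (1/2) ∫ (z(x,y) − z(y,x)) dm_x(y)`. -/
def divm (m : X → Measure X) (z : X → X → ℝ) (x : X) : ℝ :=
  2⁻¹ * ∫ y, (z x y - z y x) ∂(m x)

/-- The multivalued sign function. -/
def signSet (r : ℝ) : Set ℝ :=
  if 0 < r then {1} else if r < 0 then {-1} else Set.Icc (-1) 1

/-- `[X,d,m]` is `m`-connected with respect to `ν`. -/
def MConnected (m : X → Measure X) (ν : Measure X) : Prop :=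
  ∀ A B : Set X, MeasurableSet A → MeasurableSet B → 0 < ν A → 0 < ν B →
    A ∪ B = Set.univ → 0 < Lm m ν A B

/-- `ν` is ergodic for `m`. -/
def ErgodicRW (m : X → Measure X) (ν : Measure X) : Prop :=
  ∀ B : Set X, MeasurableSet B → (∀ x ∈ B, m x B = 1) → ν B = 0 ∨ ν B = 1

/-- `v ∈ ∂F_m(u)`, where `F_m(w) = TV_m(w)` for `w ∈ L² ∩ BV_m` and `+∞` otherwise.
This unfolds the subdifferential inequality: it forces `F_m(u) < ∞` and the inequality
is trivial for test functions `w` with `F_m(w) = ∞`. -/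
def subdiffFm (m : X → Measure X) (ν : Measure X) (u v : X → ℝ) : Prop :=
  MemLp u 2 ν ∧ MemLp v 2 ν ∧ MemBVm m ν u ∧
    ∀ w : X → ℝ, MemLp w 2 ν → MemBVm m ν w →
      (TVm m ν u).toReal + ∫ x, v x * (w x - u x) ∂ν ≤ (TVm m ν w).toReal

/-- `(λ, u)` is an `m`-eigenpair of the 1-Laplacian. -/
def IsEigenpair (m : X → Measure X) (ν : Measure X) (lam : ℝ) (u : X → ℝ) : Prop :=
  eLpNorm u 1 ν = 1 ∧
    ∃ ξ : X → ℝ, MemLp ξ ⊤ ν ∧ (∀ᵐ x ∂ν, ξ x ∈ signSet (u x)) ∧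
      subdiffFm m ν u fun x => lam * ξ x

/-- The `m`-Cheeger constant of a set `Ω`. -/
def h1m (m : X → Measure X) (ν : Measure X) (Ω : Set X) : ℝ≥0∞ :=
  sInf {r : ℝ≥0∞ | ∃ E : Set X, MeasurableSet E ∧ E ⊆ Ω ∧ 0 < ν E ∧ r = Pm m ν E / ν E}

/-- `Ω` is `m`-calibrable. -/
def Calibrable (m : X → Measure X) (ν : Measure X) (Ω : Set X) : Prop :=
  h1m m ν Ω = Pm m ν Ω / ν Ω

/-- The `m`-Cheeger constant of the whole space (for a probability measure `ν`). -/
def cheegerConst (m : X → Measure X) (ν : Measure X) : ℝ≥0∞ :=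
  sInf {r : ℝ≥0∞ | ∃ D : Set X, MeasurableSet D ∧ 0 < ν D ∧ ν D < 1 ∧
    r = Pm m ν D / min (ν D) (ν Dᶜ)}

/-- The Dirichlet energy functional `H_m(u) = (1/2) ∫∫ (u(x) − u(y))² dm_x(y) dν(x)`. -/
def Hm (m : X → Measure X) (ν : Measure X) (u : X → ℝ) : ℝ≥0∞ :=
  2⁻¹ * ∫⁻ x, ∫⁻ y, ENNReal.ofReal ((u x - u y) ^ 2) ∂(m x) ∂ν

end

/-- **Coarea formula.** For every `u ∈ L¹(X,ν)`,
`TV_m(u) = ∫_{−∞}^{+∞} P_m(E_t(u)) dt` where `E_t(u) = {x : u(x) > t}`. -/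
theorem coarea_formula
    {X : Type*} [MetricSpace X] [PolishSpace X] [MeasurableSpace X] [BorelSpace X]
    (m : X → Measure X) (hprob : ∀ x, IsProbabilityMeasure (m x))
    (hker : MeasurableKernel m)
    (ν : Measure X) [SigmaFinite ν] (hrev : Reversible m ν)
    (u : X → ℝ) (hu : Measurable u) (huint : Integrable u ν) :
    TVm m ν u = ∫⁻ t : ℝ, Pm m ν {x | t < u x} := by
  classical
  have hm_meas : Measurable m := Measure.measurable_of_measurable_coe m fun s hs => hker s hs
  let κ : ProbabilityTheory.Kernel X X := ⟨m, hm_meas⟩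
  have hκ : ProbabilityTheory.IsMarkovKernel κ := ⟨hprob⟩
  -- abbreviation for the triple integrand
  set g : ℝ → X → X → ℝ≥0∞ := fun t x y => if u y ≤ t ∧ t < u x then 1 else 0 with hg
  -- Step A : perimeter of the level set as a double integral
  have hA : ∀ t : ℝ, Pm m ν {x | t < u x} = ∫⁻ x, ∫⁻ y, g t x y ∂(m x) ∂ν := by
    intro t
    have hEt : MeasurableSet {x : X | t < u x} := measurableSet_lt measurable_const hu
    rw [Pm, Lm, ← lintegral_indicator hEt]
    refine lintegral_congr fun x => ?_
    rw [Set.indicator_apply]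
    simp only [Set.mem_setOf_eq]
    by_cases hx : t < u x
    · rw [if_pos hx]
      have hc : {x : X | t < u x}ᶜ = {y : X | u y ≤ t} := by ext y; simp [not_lt]
      rw [hc, ← lintegral_indicator_one (measurableSet_le hu measurable_const)]
      refine lintegral_congr fun y => ?_
      by_cases hy : u y ≤ t <;> simp [hg, hy, hx]
    · rw [if_neg hx]
      simp [hg, hx]
  -- joint measurability of the inner double integral as a function of (t, x)
  have hFmeas : Measurable fun p : ℝ × X => ∫⁻ y, g p.1 p.2 y ∂(m p.2) := by
    have heq : (fun p : ℝ × X => ∫⁻ y, g p.1 p.2 y ∂(m p.2))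
        = Set.indicator {q : ℝ × X | q.1 < u q.2} (fun q => m q.2 {y | u y ≤ q.1}) := by
      ext p
      rw [Set.indicator_apply]
      simp only [Set.mem_setOf_eq]
      by_cases hp : p.1 < u p.2
      · rw [if_pos hp]
        rw [← lintegral_indicator_one (measurableSet_le hu measurable_const)]
        refine lintegral_congr fun y => ?_
        by_cases hy : u y ≤ p.1 <;> simp [hg, hy, hp]
      · rw [if_neg hp]
        simp [hg, hp]
    rw [heq]
    have hsmeas : MeasurableSet {q : ℝ × X | q.1 < u q.2} :=
      measurableSet_lt measurable_fst (hu.comp measurable_snd)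
    refine Measurable.indicator ?_ hsmeas
    have hs2 : MeasurableSet {q : (ℝ × X) × X | u q.2 ≤ q.1.1} :=
      measurableSet_le (hu.comp measurable_snd) measurable_fst.fst
    have := ProbabilityTheory.Kernel.measurable_kernel_prodMk_left
      (κ := κ.comap Prod.snd measurable_snd) hs2
    simpa [ProbabilityTheory.Kernel.comap_apply, κ, Set.preimage, Set.setOf_and] using this
  -- Step B + C : Fubini and the layer-cake computation
  have hswap : (∫⁻ t : ℝ, ∫⁻ x, ∫⁻ y, g t x y ∂(m x) ∂ν)
      = ∫⁻ x, ∫⁻ y, ENNReal.ofReal (u x - u y) ∂(m x) ∂ν := by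
    rw [lintegral_lintegral_swap hFmeas.aemeasurable]
    refine lintegral_congr fun x => ?_
    have hinner : Measurable (Function.uncurry fun t y => g t x y) := by
      have : (Function.uncurry fun t y => g t x y)
          = fun p : ℝ × X => if u p.2 ≤ p.1 ∧ p.1 < u x then 1 else 0 := rfl
      rw [this]
      exact Measurable.ite
        ((measurableSet_le (hu.comp measurable_snd) measurable_fst).inter
          (measurableSet_lt measurable_fst measurable_const))
        measurable_const measurable_const
    rw [lintegral_lintegral_swap hinner.aemeasurable]
    refine lintegral_congr fun y => ?_
    have hgt : ∀ t : ℝ, g t x y = (Set.Ico (u y) (u x)).indicator 1 t := by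
      intro t
      by_cases h : u y ≤ t ∧ t < u x <;> simp [hg, Set.indicator, Set.mem_Ico, h]
    simp_rw [hgt]
    rw [lintegral_indicator_one measurableSet_Ico, Real.volume_Ico]
  -- Step D : total variation equals the one-sided integral, by reversibility
  have hF1 : Measurable (Function.uncurry fun x y : X => ENNReal.ofReal (u y - u x)) :=
    ((hu.comp measurable_snd).sub (hu.comp measurable_fst)).ennreal_ofReal
  have hF2 : Measurable (Function.uncurry fun x y : X => ENNReal.ofReal (u x - u y)) :=
    ((hu.comp measurable_fst).sub (hu.comp measurable_snd)).ennreal_ofReal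
  have hrev1 := hrev (fun x y => ENNReal.ofReal (u y - u x)) hF1
  have habs : ∀ a : ℝ, ENNReal.ofReal |a| = ENNReal.ofReal a + ENNReal.ofReal (-a) := by
    intro a
    rcases le_total 0 a with h | h
    · rw [abs_of_nonneg h, ENNReal.ofReal_eq_zero.2 (by linarith : -a ≤ 0), add_zero]
    · rw [abs_of_nonpos h, ENNReal.ofReal_eq_zero.2 h, zero_add]
  have hD : nlEnergy m ν u = 2 * ∫⁻ x, ∫⁻ y, ENNReal.ofReal (u x - u y) ∂(m x) ∂ν := by
    rw [nlEnergy]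
    have step1 : ∀ x : X, (∫⁻ y, ENNReal.ofReal |u y - u x| ∂(m x))
        = (∫⁻ y, ENNReal.ofReal (u y - u x) ∂(m x))
          + ∫⁻ y, ENNReal.ofReal (u x - u y) ∂(m x) := by
      intro x
      rw [← lintegral_add_left (f := fun y => ENNReal.ofReal (u y - u x)) (((hu.sub measurable_const)).ennreal_ofReal)]
      refine lintegral_congr fun y => ?_
      rw [habs (u y - u x)]
      ring_nf
    simp_rw [step1]
    rw [lintegral_add_left]
    · rw [hrev1, ← two_mul]
    · exact Measurable.lintegral_kernel_prod_right (κ := κ) hF1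
  rw [TVm, hD, ← mul_assoc, ENNReal.inv_mul_cancel two_ne_zero ENNReal.ofNat_ne_top, one_mul]
  simp_rw [hA]
  exact hswap.symm
end

section
/- Let [X,d,m] be a metric random walk space with an invariant and reversible probability measure ν which is ergodic. Then for every u ∈ BV_m(X,ν), TV_m(u) = 0 if and only if u is ν-a.e. equal to a constant. -/
open MeasureTheory ENNReal Filter Set Topology

section TVAux

variable {X : Type*} [MeasurableSpace X]

lemma invariant_lintegral (m : X → Measure X) (hprob : ∀ x, IsProbabilityMeasure (m x))
    (ν : Measure X) (hrev : Reversible m ν) {A : Set X} (hA : MeasurableSet A) :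
    ∫⁻ x, m x A ∂ν = ν A := by
  have h := hrev (fun _ y => A.indicator (fun _ => (1 : ℝ≥0∞)) y)
    ((measurable_const.indicator hA).comp measurable_snd)
  have h1 : ∀ x : X, ∫⁻ y, A.indicator (fun _ => (1 : ℝ≥0∞)) y ∂(m x) = m x A := by
    intro x
    rw [lintegral_indicator hA]
    simp
  have h2 : ∀ y : X, ∫⁻ x, A.indicator (fun _ => (1 : ℝ≥0∞)) y ∂(m y)
      = A.indicator (fun _ => (1 : ℝ≥0∞)) y := by
    intro y
    haveI := hprob y
    simp [lintegral_const]
  calc ∫⁻ x, m x A ∂ν = ∫⁻ x, ∫⁻ y, A.indicator (fun _ => (1 : ℝ≥0∞)) y ∂(m x) ∂ν := by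
        simp_rw [h1]
    _ = ∫⁻ y, ∫⁻ x, A.indicator (fun _ => (1 : ℝ≥0∞)) y ∂(m y) ∂ν := h
    _ = ∫⁻ y, A.indicator (fun _ => (1 : ℝ≥0∞)) y ∂ν := by simp_rw [h2]
    _ = ν A := by rw [lintegral_indicator hA]; simp

lemma null_prop (m : X → Measure X) (hprob : ∀ x, IsProbabilityMeasure (m x))
    (hker : MeasurableKernel m) (ν : Measure X) (hrev : Reversible m ν)
    {N : Set X} (hN : MeasurableSet N) (hN0 : ν N = 0) :
    ∀ᵐ x ∂ν, m x N = 0 := by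
  have : ∫⁻ x, m x N ∂ν = 0 := by rw [invariant_lintegral m hprob ν hrev hN, hN0]
  exact (lintegral_eq_zero_iff (hker N hN)).1 this

/-- From a measurable null set, produce a hereditarily null measurable superset. -/
lemma hereditary_null (m : X → Measure X) (hprob : ∀ x, IsProbabilityMeasure (m x))
    (hker : MeasurableKernel m) (ν : Measure X) (hrev : Reversible m ν)
    {N : Set X} (hN : MeasurableSet N) (hN0 : ν N = 0) :
    ∃ N' : Set X, MeasurableSet N' ∧ ν N' = 0 ∧ N ⊆ N' ∧ ∀ x ∉ N', m x N' = 0 := by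
  let S : ℕ → Set X := fun k => Nat.rec N (fun _ Nk => Nk ∪ {x | m x Nk ≠ 0}) k
  have hSsucc : ∀ k, S (k + 1) = S k ∪ {x | m x (S k) ≠ 0} := fun k => rfl
  have hmeas : ∀ k, MeasurableSet (S k) ∧ ν (S k) = 0 := by
    intro k
    induction k with
    | zero => exact ⟨hN, hN0⟩
    | succ k ih =>
      have hset : MeasurableSet {x | m x (S k) ≠ 0} :=
        ((hker _ ih.1) (measurableSet_singleton 0)).compl
      have hnull : ν {x | m x (S k) ≠ 0} = 0 := by
        have := null_prop m hprob hker ν hrev ih.1 ih.2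
        simpa [ae_iff] using this
      rw [hSsucc]
      exact ⟨ih.1.union hset, measure_union_null ih.2 hnull⟩
  refine ⟨⋃ k, S k, MeasurableSet.iUnion (fun k => (hmeas k).1),
    measure_iUnion_null (fun k => (hmeas k).2), Set.subset_iUnion S 0, ?_⟩
  intro x hx
  have hxk : ∀ k, x ∉ S k := fun k hk => hx (Set.mem_iUnion.2 ⟨k, hk⟩)
  refine measure_iUnion_null (fun k => ?_)
  by_contra h
  exact hxk (k + 1) (by rw [hSsucc]; exact Or.inr h)

end TVAux

/-- If `ν` is an ergodic invariant and reversible probability measure, then for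
`u ∈ BV_m(X,ν)`: `TV_m(u) = 0` iff `u` is `ν`-a.e. equal to a constant. -/
theorem tv_eq_zero_iff_ae_const
    {X : Type*} [MetricSpace X] [PolishSpace X] [MeasurableSpace X] [BorelSpace X]
    (m : X → Measure X) (hprob : ∀ x, IsProbabilityMeasure (m x))
    (hker : MeasurableKernel m)
    (ν : Measure X) [IsProbabilityMeasure ν] (hrev : Reversible m ν)
    (herg : ErgodicRW m ν)
    (u : X → ℝ) (hu : MemBVm m ν u) :
    TVm m ν u = 0 ↔ ∃ c : ℝ, u =ᵐ[ν] fun _ => c := by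
  constructor
  · -- hard direction
    intro hTV
    have h0 : nlEnergy m ν u = 0 := by
      have := hTV
      rw [TVm] at this
      rcases mul_eq_zero.1 this with h | h
      · exact absurd h (by simp)
      · exact h
    -- measurability of the inner integral via kernels
    have hm_meas : Measurable m := Measure.measurable_of_measurable_coe _ (fun A hA => hker A hA)
    let κ : ProbabilityTheory.Kernel X X := ⟨m, hm_meas⟩
    haveI : ProbabilityTheory.IsMarkovKernel κ := ⟨hprob⟩
    have hF : Measurable (Function.uncurry fun x y => ENNReal.ofReal |u y - u x|) := by
      apply Measurable.ennreal_ofReal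
      exact ((hu.1.comp measurable_snd).sub (hu.1.comp measurable_fst)).abs
    have hg : Measurable fun x => ∫⁻ y, ENNReal.ofReal |u y - u x| ∂(κ x) :=
      Measurable.lintegral_kernel_prod_right hF
    have hg : Measurable fun x => ∫⁻ y, ENNReal.ofReal |u y - u x| ∂(m x) := hg
    set g : X → ℝ≥0∞ := fun x => ∫⁻ y, ENNReal.ofReal |u y - u x| ∂(m x) with hgdef
    have hgae : ∀ᵐ x ∂ν, g x = 0 := (lintegral_eq_zero_iff hg).1 h0
    set N₀ : Set X := {x | g x ≠ 0} with hN0def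
    have hN0meas : MeasurableSet N₀ := (hg (measurableSet_singleton 0)).compl
    have hN0null : ν N₀ = 0 := by simpa [ae_iff] using hgae
    obtain ⟨N', hN'meas, hN'null, hN0N', hN'her⟩ :=
      hereditary_null m hprob hker ν hrev hN0meas hN0null
    -- for x outside N', m x gives full mass to {u = u x}
    have hkey : ∀ x ∉ N', m x {y | u y ≠ u x} = 0 := by
      intro x hx
      have hgx : g x = 0 := by
        by_contra h
        exact hx (hN0N' h)
      have hmy : Measurable fun y => ENNReal.ofReal |u y - u x| :=
        (hu.1.sub measurable_const).abs.ennreal_ofReal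
      have := (lintegral_eq_zero_iff hmy).1 hgx
      have h2 : ∀ᵐ y ∂(m x), u y = u x := by
        filter_upwards [this] with y hy
        have : |u y - u x| ≤ 0 := by
          simpa [ENNReal.ofReal_eq_zero] using hy
        have := le_antisymm this (abs_nonneg _)
        have := abs_eq_zero.1 this
        linarith
      simpa [ae_iff] using h2
    -- the sublevel sets minus N' are invariant
    have hF01 : ∀ t : ℝ, ν {x | u x ≤ t} = 0 ∨ ν {x | u x ≤ t} = 1 := by
      intro t
      have hBmeas : MeasurableSet ({x | u x ≤ t} \ N') :=
        (hu.1 measurableSet_Iic).diff hN'meas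
      have hBinv : ∀ x ∈ {x | u x ≤ t} \ N', m x ({x | u x ≤ t} \ N') = 1 := by
        intro x hx
        haveI := hprob x
        rw [← prob_compl_eq_zero_iff hBmeas]
        have hsub : ({x | u x ≤ t} \ N')ᶜ ⊆ {y | u y ≠ u x} ∪ N' := by
          intro y hy
          by_cases hyN : y ∈ N'
          · exact Or.inr hyN
          · left
            intro huy
            apply hy
            exact ⟨by simp only [Set.mem_setOf_eq]; rw [huy]; exact hx.1, hyN⟩
        refine le_antisymm ?_ zero_le
        calc m x ({x | u x ≤ t} \ N')ᶜ ≤ m x ({y | u y ≠ u x} ∪ N') := measure_mono hsub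
          _ ≤ m x {y | u y ≠ u x} + m x N' := measure_union_le _ _
          _ = 0 := by rw [hkey x hx.2, hN'her x hx.2, add_zero]
      have := herg _ hBmeas hBinv
      rwa [measure_diff_null hN'null] at this
    -- the set of levels with full measure
    set s : Set ℝ := {t : ℝ | ν {x | u x ≤ t} = 1} with hsdef
    have hfull : ∀ t t' : ℝ, t ∈ s → t ≤ t' → t' ∈ s := by
      intro t t' ht htt'
      have hmono : ν {x | u x ≤ t} ≤ ν {x | u x ≤ t'} :=
        measure_mono (fun x hx => le_trans hx htt')
      rw [ht] at hmono
      exact le_antisymm prob_le_one hmono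
    have hs_ne : s.Nonempty := by
      by_contra h
      have hall : ∀ n : ℕ, ν {x | u x ≤ (n : ℝ)} = 0 := by
        intro n
        rcases hF01 (n : ℝ) with h' | h'
        · exact h'
        · exact absurd ⟨(n : ℝ), h'⟩ h
      have huniv : (⋃ n : ℕ, {x | u x ≤ (n : ℝ)}) = Set.univ := by
        ext x
        simp only [Set.mem_iUnion, Set.mem_setOf_eq, Set.mem_univ, iff_true]
        exact exists_nat_ge (u x)
      have h0' := measure_iUnion_null hall
      rw [huniv] at h0'
      simp at h0'
    have hs_bdd : BddBelow s := by
      by_contra h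
      rw [not_bddBelow_iff] at h
      have hall : ∀ n : ℕ, ν {x | -(n : ℝ) < u x} = 0 := by
        intro n
        obtain ⟨t, ht, htn⟩ := h (-(n : ℝ))
        have h1 : ν {x | u x ≤ -(n : ℝ)} = 1 := hfull t _ ht htn.le
        have hcompl : {x | -(n : ℝ) < u x} = {x | u x ≤ -(n : ℝ)}ᶜ := by
          ext x; simp [not_le]
        rw [hcompl]
        exact (prob_compl_eq_zero_iff (hu.1 measurableSet_Iic)).2 h1
      have huniv : (⋃ n : ℕ, {x | -(n : ℝ) < u x}) = Set.univ := by
        ext x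
        simp only [Set.mem_iUnion, Set.mem_setOf_eq, Set.mem_univ, iff_true]
        obtain ⟨n, hn⟩ := exists_nat_gt (-u x)
        exact ⟨n, by linarith⟩
      have h0' := measure_iUnion_null hall
      rw [huniv] at h0'
      simp at h0'
    set c : ℝ := sInf s with hcdef
    -- ν {u ≤ c} = 1
    have h_gt : ν {x | c < u x} = 0 := by
      have hsets : {x | c < u x} = ⋃ n : ℕ, {x | c + (1 : ℝ) / (n + 1) < u x} := by
        ext x
        simp only [Set.mem_iUnion, Set.mem_setOf_eq]
        constructor
        · intro hx
          obtain ⟨n, hn⟩ := exists_nat_one_div_lt (show (0:ℝ) < u x - c by linarith)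
          exact ⟨n, by linarith⟩
        · rintro ⟨n, hn⟩
          have : (0:ℝ) < 1 / (n + 1) := by positivity
          linarith
      rw [hsets]
      refine measure_iUnion_null fun n => ?_
      have hlt : c < c + (1 : ℝ) / (n + 1) := by
        have : (0:ℝ) < 1 / (n + 1) := by positivity
        linarith
      obtain ⟨t, hts, htlt⟩ := exists_lt_of_csInf_lt hs_ne hlt
      have h1 : ν {x | u x ≤ c + (1 : ℝ) / (n + 1)} = 1 := hfull t _ hts htlt.le
      have hcompl : {x | c + (1 : ℝ) / (n + 1) < u x} = {x | u x ≤ c + (1 : ℝ) / (n + 1)}ᶜ := by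
        ext x; simp [not_le]
      rw [hcompl]
      exact (prob_compl_eq_zero_iff (hu.1 measurableSet_Iic)).2 h1
    have h_lt : ν {x | u x < c} = 0 := by
      have hsets : {x | u x < c} = ⋃ n : ℕ, {x | u x ≤ c - (1 : ℝ) / (n + 1)} := by
        ext x
        simp only [Set.mem_iUnion, Set.mem_setOf_eq]
        constructor
        · intro hx
          obtain ⟨n, hn⟩ := exists_nat_one_div_lt (show (0:ℝ) < c - u x by linarith)
          exact ⟨n, by linarith⟩
        · rintro ⟨n, hn⟩
          have : (0:ℝ) < 1 / (n + 1) := by positivity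
          linarith
      rw [hsets]
      refine measure_iUnion_null fun n => ?_
      rcases hF01 (c - (1 : ℝ) / (n + 1)) with h' | h'
      · exact h'
      · exfalso
        have hle : c ≤ c - (1 : ℝ) / (n + 1) := csInf_le hs_bdd h'
        have : (0:ℝ) < 1 / (n + 1) := by positivity
        linarith
    refine ⟨c, ?_⟩
    rw [Filter.EventuallyEq, ae_iff]
    have hsub : {x | ¬ u x = c} ⊆ {x | u x < c} ∪ {x | c < u x} := by
      intro x hx
      rcases lt_or_gt_of_ne hx with h | h
      · exact Or.inl h
      · exact Or.inr h
    exact measure_mono_null hsub (measure_union_null h_lt h_gt)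
  · -- easy direction
    rintro ⟨c, hc⟩
    have hNmeas : MeasurableSet {x | u x ≠ c} :=
      (hu.1 (measurableSet_singleton c)).compl
    have hNnull : ν {x | u x ≠ c} = 0 := by simpa [Filter.EventuallyEq, ae_iff] using hc
    have hmN : ∀ᵐ x ∂ν, m x {x | u x ≠ c} = 0 :=
      null_prop m hprob hker ν hrev hNmeas hNnull
    have hinner : ∀ᵐ x ∂ν, (∫⁻ y, ENNReal.ofReal |u y - u x| ∂(m x)) = 0 := by
      filter_upwards [hc, hmN] with x hx hmx
      have hy : ∀ᵐ y ∂(m x), u y = c := by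
        rw [ae_iff]
        simpa using hmx
      have : ∀ᵐ y ∂(m x), ENNReal.ofReal |u y - u x| = 0 := by
        filter_upwards [hy] with y hy'
        simp [hy', hx]
      calc (∫⁻ y, ENNReal.ofReal |u y - u x| ∂(m x)) = ∫⁻ _, 0 ∂(m x) :=
            lintegral_congr_ae this
        _ = 0 := lintegral_zero
    have : nlEnergy m ν u = 0 := by
      rw [nlEnergy]
      calc (∫⁻ x, ∫⁻ y, ENNReal.ofReal |u y - u x| ∂(m x) ∂ν) = ∫⁻ _, 0 ∂ν :=
            lintegral_congr_ae hinner
        _ = 0 := lintegral_zero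
    rw [TVm, this, mul_zero]
end

section
/- Let [X,d,m] be a metric random walk space with an invariant and reversible σ-finite measure ν. If (u_n) ⊂ BV_m(X,ν) ∩ L²(X,ν) converges weakly in L²(X,ν) to u ∈ BV_m(X,ν) ∩ L²(X,ν), then TV_m(u) ≤ liminf_{n→∞} TV_m(u_n). -/
open MeasureTheory ENNReal Filter Set Topology

noncomputable section auxlsc

open ProbabilityTheory

variable {X : Type*} [MeasurableSpace X]

/-- The kernel associated to a measurable family of measures. -/
def rwKernel (m : X → Measure X) (hker : MeasurableKernel m) : Kernel X X :=
  ⟨m, Measure.measurable_of_measurable_coe m hker⟩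

@[simp] lemma rwKernel_apply (m : X → Measure X) (hker : MeasurableKernel m) (x : X) :
    rwKernel m hker x = m x := rfl

end auxlsc

set_option maxHeartbeats 1000000 in
/-- `TV_m` is lower semicontinuous with respect to weak convergence in `L²(X,ν)`. -/
theorem tv_lsc_weakL2
    {X : Type*} [MetricSpace X] [PolishSpace X] [MeasurableSpace X] [BorelSpace X]
    (m : X → Measure X) (hprob : ∀ x, IsProbabilityMeasure (m x))
    (hker : MeasurableKernel m)
    (ν : Measure X) [SigmaFinite ν] (hrev : Reversible m ν)
    (u : X → ℝ) (un : ℕ → X → ℝ)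
    (hu : MemBVm m ν u) (hu2 : MemLp u 2 ν)
    (hun : ∀ n, MemBVm m ν (un n)) (hun2 : ∀ n, MemLp (un n) 2 ν)
    (hweak : ∀ φ : X → ℝ, MemLp φ 2 ν →
      Tendsto (fun n => ∫ x, un n x * φ x ∂ν) atTop (𝓝 (∫ x, u x * φ x ∂ν))) :
    TVm m ν u ≤ Filter.liminf (fun n => TVm m ν (un n)) atTop := by
  classical
  set κ : ProbabilityTheory.Kernel X X := rwKernel m hker with hκdef
  haveI : ProbabilityTheory.IsMarkovKernel κ := ⟨hprob⟩
  set μ : Measure (X × X) := ν.compProd κ with hμdef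
  -- Step 0: the energy as a single lintegral over μ
  have hL1 : ∀ v : X → ℝ, Measurable v →
      (∫⁻ p : X × X, ENNReal.ofReal |v p.2 - v p.1| ∂μ) = nlEnergy m ν v := by
    intro v hv
    rw [Measure.lintegral_compProd
      (f := fun p : X × X => ENNReal.ofReal |v p.2 - v p.1|)
      (((hv.comp measurable_snd).sub (hv.comp measurable_fst)).abs.ennreal_ofReal)]
    rfl
  -- Step 1: μ is invariant under the swap
  have hswap : μ.map Prod.swap = μ := by
    ext s hs
    have hind : Measurable (s.indicator (fun _ => (1 : ℝ≥0∞))) :=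
      measurable_const.indicator hs
    have h := hrev (fun x y => s.indicator (fun _ => (1 : ℝ≥0∞)) (y, x))
      (hind.comp measurable_swap)
    rw [Measure.map_apply measurable_swap hs,
      Measure.compProd_apply (hs.preimage measurable_swap), Measure.compProd_apply hs]
    have e1 : ∀ x : X, κ x (Prod.mk x ⁻¹' (Prod.swap ⁻¹' s))
        = ∫⁻ y, s.indicator (fun _ => (1 : ℝ≥0∞)) (y, x) ∂(m x) := by
      intro x
      have hsl : MeasurableSet ((fun y => (y, x)) ⁻¹' s) :=
        hs.preimage (measurable_id.prodMk measurable_const)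
      have hfun : (fun y => s.indicator (fun _ => (1 : ℝ≥0∞)) (y, x))
          = ((fun y => (y, x)) ⁻¹' s).indicator (fun _ => (1 : ℝ≥0∞)) := by
        funext y; simp [Set.indicator_apply, Set.mem_preimage]
      rw [show κ x (Prod.mk x ⁻¹' (Prod.swap ⁻¹' s)) = m x ((fun y => (y, x)) ⁻¹' s) from rfl,
        hfun, lintegral_indicator_const hsl, one_mul]
    have e2 : ∀ x : X, κ x (Prod.mk x ⁻¹' s)
        = ∫⁻ y, s.indicator (fun _ => (1 : ℝ≥0∞)) (x, y) ∂(m x) := by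
      intro x
      have hsl : MeasurableSet (Prod.mk x ⁻¹' s) := hs.preimage measurable_prodMk_left
      have hfun : (fun y => s.indicator (fun _ => (1 : ℝ≥0∞)) (x, y))
          = (Prod.mk x ⁻¹' s).indicator (fun _ => (1 : ℝ≥0∞)) := by
        funext y; simp [Set.indicator_apply, Set.mem_preimage]
      rw [show κ x (Prod.mk x ⁻¹' s) = m x (Prod.mk x ⁻¹' s) from rfl,
        hfun, lintegral_indicator_const hsl, one_mul]
    simp_rw [e1, e2]
    exact h
  -- swap invariance for Bochner integrals
  have hintswap : ∀ f : X × X → ℝ, AEStronglyMeasurable f μ →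
      ∫ p, f p ∂μ = ∫ p, f p.swap ∂μ := by
    intro f hf
    conv_lhs => rw [← hswap]
    rw [integral_map measurable_swap.aemeasurable (by rwa [hswap])]
  have hintegswap : ∀ f : X × X → ℝ, Integrable f μ → Integrable (fun p => f p.swap) μ := by
    intro f hf
    have h1 : Integrable f (μ.map Prod.swap) := by rwa [hswap]
    exact (integrable_map_measure (by rw [hswap]; exact hf.aestronglyMeasurable) measurable_swap.aemeasurable).mp h1
  -- Step 2: the truncated sign test functions
  set A : ℕ → Set X := spanningSets ν with hAdef
  have hAmeas : ∀ k, MeasurableSet (A k) := fun k => measurableSet_spanningSets ν k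
  have hAfin : ∀ k, ν (A k) < ⊤ := fun k => measure_spanningSets_lt_top ν k
  set E : ℕ → Set (X × X) := fun k => A k ×ˢ A k with hEdef
  have hEmeas : ∀ k, MeasurableSet (E k) := fun k => (hAmeas k).prod (hAmeas k)
  set sgn : X × X → ℝ :=
    fun p => if 0 < u p.2 - u p.1 then 1 else if u p.2 - u p.1 < 0 then -1 else 0 with hsgndef
  have hΔmeas : Measurable fun p : X × X => u p.2 - u p.1 :=
    (hu.1.comp measurable_snd).sub (hu.1.comp measurable_fst)
  have hsgnmeas : Measurable sgn :=
    Measurable.ite (measurableSet_lt measurable_const hΔmeas) measurable_const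
      (Measurable.ite (measurableSet_lt hΔmeas measurable_const) measurable_const
        measurable_const)
  have hsgnle : ∀ p, |sgn p| ≤ 1 := by
    intro p; rw [hsgndef]; dsimp only; split_ifs <;> norm_num
  set g : ℕ → X × X → ℝ := fun k => (E k).indicator sgn with hgdef
  have hgmeas : ∀ k, Measurable (g k) := fun k => hsgnmeas.indicator (hEmeas k)
  have hg0 : ∀ k p, p ∉ E k → g k p = 0 := fun k p hp => Set.indicator_of_notMem hp _
  have hgle : ∀ k p, |g k p| ≤ 1 := by
    intro k p
    by_cases hp : p ∈ E k
    · rw [hgdef]; dsimp only; rw [Set.indicator_of_mem hp]; exact hsgnle p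
    · rw [hg0 k p hp]; norm_num
  -- the dual test functions
  set ψ₁ : ℕ → X → ℝ := fun k x => ∫ y, g k (x, y) ∂(m x) with hψ₁def
  set ψ₂ : ℕ → X → ℝ := fun k x => ∫ y, g k (y, x) ∂(m x) with hψ₂def
  set φ : ℕ → X → ℝ := fun k x => ψ₂ k x - ψ₁ k x with hφdef
  have hψ₁meas : ∀ k, StronglyMeasurable (ψ₁ k) := by
    intro k
    exact StronglyMeasurable.integral_kernel_prod_right
      (κ := κ) (f := fun x y => g k (x, y)) (hgmeas k).stronglyMeasurable
  have hψ₂meas : ∀ k, StronglyMeasurable (ψ₂ k) := by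
    intro k
    exact StronglyMeasurable.integral_kernel_prod_right
      (κ := κ) (f := fun x y => g k (y, x))
      (((hgmeas k).comp measurable_swap).stronglyMeasurable)
  have hψ₁le : ∀ k x, |ψ₁ k x| ≤ 1 := by
    intro k x
    have := norm_integral_le_of_norm_le_const (μ := m x) (f := fun y => g k (x, y)) (C := 1)
      (ae_of_all _ fun y => by rw [Real.norm_eq_abs]; exact hgle k (x, y))
    simpa [measure_univ] using this
  have hψ₂le : ∀ k x, |ψ₂ k x| ≤ 1 := by
    intro k x
    have := norm_integral_le_of_norm_le_const (μ := m x) (f := fun y => g k (y, x)) (C := 1)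
      (ae_of_all _ fun y => by rw [Real.norm_eq_abs]; exact hgle k (y, x))
    simpa [measure_univ] using this
  have hψ₁0 : ∀ k x, x ∉ A k → ψ₁ k x = 0 := by
    intro k x hx
    have : ∀ y, g k (x, y) = 0 := fun y => hg0 k _ (fun hmem => hx hmem.1)
    rw [hψ₁def]; dsimp only; simp [this]
  have hψ₂0 : ∀ k x, x ∉ A k → ψ₂ k x = 0 := by
    intro k x hx
    have : ∀ y, g k (y, x) = 0 := fun y => hg0 k _ (fun hmem => hx hmem.2)
    rw [hψ₂def]; dsimp only; simp [this]
  have hφmeas : ∀ k, StronglyMeasurable (φ k) := fun k => (hψ₂meas k).sub (hψ₁meas k)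
  have hφbd : ∀ k x, |φ k x| ≤ 2 := by
    intro k x
    rw [hφdef]; dsimp only
    calc |ψ₂ k x - ψ₁ k x| ≤ |ψ₂ k x| + |ψ₁ k x| := by
          simpa [Real.norm_eq_abs] using norm_sub_le (ψ₂ k x) (ψ₁ k x)
      _ ≤ 1 + 1 := add_le_add (hψ₂le k x) (hψ₁le k x)
      _ = 2 := by norm_num
  have hφ0 : ∀ k x, x ∉ A k → φ k x = 0 := by
    intro k x hx
    rw [hφdef]; dsimp only; rw [hψ₁0 k x hx, hψ₂0 k x hx, sub_zero]
  have hφ2 : ∀ k, MemLp (φ k) 2 ν := by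
    intro k
    refine MemLp.of_le (memLp_indicator_const 2 (hAmeas k) (2 : ℝ) (Or.inr (hAfin k).ne))
      (hφmeas k).aestronglyMeasurable (ae_of_all _ fun x => ?_)
    by_cases hx : x ∈ A k
    · rw [Set.indicator_of_mem hx]
      simp only [Real.norm_eq_abs]
      exact (hφbd k x).trans (by norm_num)
    · rw [hφ0 k x hx, Set.indicator_of_notMem hx]
  -- Step 3: integrability lemmas
  have hsq : ∀ v : X → ℝ, MemLp v 2 ν → ∫⁻ x, ENNReal.ofReal (v x ^ 2) ∂ν < ⊤ := by
    intro v hv2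
    have h := hv2.integrable_sq.hasFiniteIntegral
    rw [hasFiniteIntegral_iff_norm] at h
    have h2 : ∀ x : X, ENNReal.ofReal ‖v x ^ 2‖ = ENNReal.ofReal (v x ^ 2) := fun x => by
      rw [Real.norm_eq_abs, abs_of_nonneg (sq_nonneg (v x))]
    simp_rw [h2] at h
    exact h
  have hAv : ∀ v : X → ℝ, MemLp v 2 ν → ∀ k,
      ∫⁻ x, (A k).indicator (fun x => ENNReal.ofReal |v x|) x ∂ν < ⊤ := by
    intro v hv2 k
    have hb : ∀ x, (A k).indicator (fun x => ENNReal.ofReal |v x|) x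
        ≤ (A k).indicator (fun _ => (1 : ℝ≥0∞)) x + ENNReal.ofReal (v x ^ 2) := by
      intro x
      by_cases hx : x ∈ A k
      · rw [Set.indicator_of_mem hx, Set.indicator_of_mem hx]
        have h1 : |v x| ≤ 1 + v x ^ 2 := by nlinarith [sq_nonneg (|v x| - 1), sq_abs (v x)]
        calc ENNReal.ofReal |v x| ≤ ENNReal.ofReal (1 + v x ^ 2) := ENNReal.ofReal_le_ofReal h1
          _ = 1 + ENNReal.ofReal (v x ^ 2) := by
              rw [ENNReal.ofReal_add zero_le_one (sq_nonneg _), ENNReal.ofReal_one]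
      · rw [Set.indicator_of_notMem hx, Set.indicator_of_notMem hx]; exact zero_le
    calc ∫⁻ x, (A k).indicator (fun x => ENNReal.ofReal |v x|) x ∂ν
        ≤ ∫⁻ x, ((A k).indicator (fun _ => (1 : ℝ≥0∞)) x + ENNReal.ofReal (v x ^ 2)) ∂ν :=
          lintegral_mono hb
      _ = ν (A k) + ∫⁻ x, ENNReal.ofReal (v x ^ 2) ∂ν := by
          rw [lintegral_add_left (measurable_const.indicator (hAmeas k)),
            lintegral_indicator_const (hAmeas k), one_mul]
      _ < ⊤ := ENNReal.add_lt_top.mpr ⟨hAfin k, hsq v hv2⟩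
  have hΔint : ∀ v : X → ℝ, Measurable v → nlEnergy m ν v < ⊤ →
      Integrable (fun p : X × X => v p.2 - v p.1) μ := by
    intro v hv hfin
    refine ⟨((hv.comp measurable_snd).sub (hv.comp measurable_fst)).aestronglyMeasurable, ?_⟩
    rw [hasFiniteIntegral_iff_norm]
    calc ∫⁻ p, ENNReal.ofReal ‖v p.2 - v p.1‖ ∂μ
        = ∫⁻ p, ENNReal.ofReal |v p.2 - v p.1| ∂μ := by simp_rw [Real.norm_eq_abs]
      _ = nlEnergy m ν v := hL1 v hv
      _ < ⊤ := hfin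
  have hgΔint : ∀ v : X → ℝ, Measurable v → nlEnergy m ν v < ⊤ → ∀ k,
      Integrable (fun p : X × X => g k p * (v p.2 - v p.1)) μ := by
    intro v hv hfin k
    refine Integrable.mono (hΔint v hv hfin)
      (((hgmeas k).mul ((hv.comp measurable_snd).sub (hv.comp measurable_fst))).aestronglyMeasurable)
      (ae_of_all _ fun p => ?_)
    rw [Real.norm_eq_abs, Real.norm_eq_abs, abs_mul]
    calc |g k p| * |v p.2 - v p.1| ≤ 1 * |v p.2 - v p.1| :=
          mul_le_mul_of_nonneg_right (hgle k p) (abs_nonneg _)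
      _ = |v p.2 - v p.1| := one_mul _
  have hI2 : ∀ v : X → ℝ, Measurable v → MemLp v 2 ν → ∀ k,
      Integrable (fun p : X × X => g k p * v p.1) μ := by
    intro v hv hv2 k
    refine ⟨((hgmeas k).mul (hv.comp measurable_fst)).aestronglyMeasurable, ?_⟩
    rw [hasFiniteIntegral_iff_norm]
    have hb : ∀ p : X × X, ENNReal.ofReal ‖g k p * v p.1‖
        ≤ (A k ×ˢ (Set.univ : Set X)).indicator (fun p : X × X => ENNReal.ofReal |v p.1|) p := by
      intro p
      by_cases hp : p ∈ A k ×ˢ (Set.univ : Set X)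
      · rw [Set.indicator_of_mem hp, Real.norm_eq_abs, abs_mul]
        refine ENNReal.ofReal_le_ofReal ?_
        calc |g k p| * |v p.1| ≤ 1 * |v p.1| :=
              mul_le_mul_of_nonneg_right (hgle k p) (abs_nonneg _)
          _ = |v p.1| := one_mul _
      · rw [Set.indicator_of_notMem hp, hg0 k p (fun hmem => hp ⟨hmem.1, trivial⟩)]
        simp
    calc ∫⁻ p, ENNReal.ofReal ‖g k p * v p.1‖ ∂μ
        ≤ ∫⁻ p, (A k ×ˢ (Set.univ : Set X)).indicator
            (fun p : X × X => ENNReal.ofReal |v p.1|) p ∂μ := lintegral_mono hb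
      _ = ∫⁻ x, ∫⁻ y, (A k ×ˢ (Set.univ : Set X)).indicator
            (fun p : X × X => ENNReal.ofReal |v p.1|) (x, y) ∂(m x) ∂ν :=
          Measure.lintegral_compProd
            (((hv.comp measurable_fst).abs.ennreal_ofReal).indicator
              ((hAmeas k).prod MeasurableSet.univ))
      _ = ∫⁻ x, (A k).indicator (fun x => ENNReal.ofReal |v x|) x ∂ν := by
          refine lintegral_congr fun x => ?_
          by_cases hx : x ∈ A k
          · have h1 : ∀ y : X, (A k ×ˢ (Set.univ : Set X)).indicator
                (fun p : X × X => ENNReal.ofReal |v p.1|) (x, y) = ENNReal.ofReal |v x| :=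
              fun y => Set.indicator_of_mem (Set.mem_prod.mpr ⟨hx, Set.mem_univ y⟩) _
            simp_rw [h1, lintegral_const, measure_univ, mul_one, Set.indicator_of_mem hx]
          · have h1 : ∀ y : X, (A k ×ˢ (Set.univ : Set X)).indicator
                (fun p : X × X => ENNReal.ofReal |v p.1|) (x, y) = 0 :=
              fun y => Set.indicator_of_notMem (fun hmem => hx hmem.1) _
            simp_rw [h1, lintegral_zero, Set.indicator_of_notMem hx]
      _ < ⊤ := hAv v hv2 k
  have hψint : ∀ (v ψ : X → ℝ) (k : ℕ), Measurable v → MemLp v 2 ν →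
      StronglyMeasurable ψ → (∀ x, |ψ x| ≤ 1) → (∀ x, x ∉ A k → ψ x = 0) →
      Integrable (fun x => v x * ψ x) ν := by
    intro v ψ k hv hv2 hψm hψle hψ0
    refine ⟨(hv.aestronglyMeasurable.mul hψm.aestronglyMeasurable), ?_⟩
    rw [hasFiniteIntegral_iff_norm]
    have hb : ∀ x, ENNReal.ofReal ‖v x * ψ x‖
        ≤ (A k).indicator (fun x => ENNReal.ofReal |v x|) x := by
      intro x
      by_cases hx : x ∈ A k
      · rw [Set.indicator_of_mem hx, Real.norm_eq_abs, abs_mul]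
        refine ENNReal.ofReal_le_ofReal ?_
        calc |v x| * |ψ x| ≤ |v x| * 1 :=
              mul_le_mul_of_nonneg_left (hψle x) (abs_nonneg _)
          _ = |v x| := mul_one _
      · rw [Set.indicator_of_notMem hx, hψ0 x hx, mul_zero]; simp
    exact lt_of_le_of_lt (lintegral_mono hb) (hAv v hv2 k)
  -- Step 4: the key duality identity
  have keypair : ∀ v : X → ℝ, Measurable v → MemLp v 2 ν → nlEnergy m ν v < ⊤ → ∀ k,
      ∫ x, v x * φ k x ∂ν = ∫ p : X × X, g k p * (v p.2 - v p.1) ∂μ := by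
    intro v hv hv2 hfin k
    have hgΔ : Integrable (fun p : X × X => g k p * (v p.2 - v p.1)) μ := hgΔint v hv hfin k
    have h2 : Integrable (fun p : X × X => g k p * v p.1) μ := hI2 v hv hv2 k
    have h1 : Integrable (fun p : X × X => g k p * v p.2) μ := by
      have he : (fun p : X × X => g k p * v p.2)
          = fun p : X × X => g k p * (v p.2 - v p.1) + g k p * v p.1 := by
        funext p; ring
      rw [he]; exact hgΔ.add h2
    have h1' : Integrable (fun p : X × X => g k p.swap * v p.1) μ := by
      have := hintegswap _ h1
      simpa using this
    have hswapint : ∫ p : X × X, g k p * v p.2 ∂μ = ∫ p : X × X, g k p.swap * v p.1 ∂μ := by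
      have := hintswap (fun p : X × X => g k p * v p.2) h1.aestronglyMeasurable
      simpa using this
    have e1 : ∫ p : X × X, g k p.swap * v p.1 ∂μ = ∫ x, v x * ψ₂ k x ∂ν := by
      rw [Measure.integral_compProd h1']
      refine integral_congr_ae (ae_of_all _ fun x => ?_)
      show (∫ y, g k (y, x) * v x ∂(m x)) = v x * ψ₂ k x
      rw [integral_mul_const]
      exact mul_comm _ _
    have e2 : ∫ p : X × X, g k p * v p.1 ∂μ = ∫ x, v x * ψ₁ k x ∂ν := by
      rw [Measure.integral_compProd h2]
      refine integral_congr_ae (ae_of_all _ fun x => ?_)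
      show (∫ y, g k (x, y) * v x ∂(m x)) = v x * ψ₁ k x
      rw [integral_mul_const]
      exact mul_comm _ _
    have j1 : Integrable (fun x => v x * ψ₂ k x) ν :=
      hψint v (ψ₂ k) k hv hv2 (hψ₂meas k) (hψ₂le k) (hψ₂0 k)
    have j2 : Integrable (fun x => v x * ψ₁ k x) ν :=
      hψint v (ψ₁ k) k hv hv2 (hψ₁meas k) (hψ₁le k) (hψ₁0 k)
    calc ∫ x, v x * φ k x ∂ν = ∫ x, (v x * ψ₂ k x - v x * ψ₁ k x) ∂ν := by
          refine integral_congr_ae (ae_of_all _ fun x => ?_)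
          rw [hφdef]; dsimp only; ring
      _ = (∫ x, v x * ψ₂ k x ∂ν) - ∫ x, v x * ψ₁ k x ∂ν := integral_sub j1 j2
      _ = (∫ p : X × X, g k p * v p.2 ∂μ) - ∫ p : X × X, g k p * v p.1 ∂μ := by
          rw [hswapint, e1, e2]
      _ = ∫ p : X × X, (g k p * v p.2 - g k p * v p.1) ∂μ := (integral_sub h1 h2).symm
      _ = ∫ p : X × X, g k p * (v p.2 - v p.1) ∂μ := by
          refine integral_congr_ae (ae_of_all _ fun p => ?_); ring
  -- Step 5: the pairing is dominated by the energy
  have hC2 : ∀ k n, ENNReal.ofReal (∫ p : X × X, g k p * (un n p.2 - un n p.1) ∂μ)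
      ≤ nlEnergy m ν (un n) := by
    intro k n
    have hΔn : Integrable (fun p : X × X => un n p.2 - un n p.1) μ :=
      hΔint _ (hun n).1 (hun n).2
    have habs : Integrable (fun p : X × X => |un n p.2 - un n p.1|) μ := hΔn.abs
    have h1 : ∫ p : X × X, g k p * (un n p.2 - un n p.1) ∂μ
        ≤ ∫ p : X × X, |un n p.2 - un n p.1| ∂μ := by
      refine integral_mono (hgΔint _ (hun n).1 (hun n).2 k) habs fun p => ?_
      calc g k p * (un n p.2 - un n p.1) ≤ |g k p * (un n p.2 - un n p.1)| := le_abs_self _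
        _ = |g k p| * |un n p.2 - un n p.1| := abs_mul _ _
        _ ≤ 1 * |un n p.2 - un n p.1| :=
            mul_le_mul_of_nonneg_right (hgle k p) (abs_nonneg _)
        _ = |un n p.2 - un n p.1| := one_mul _
    calc ENNReal.ofReal (∫ p : X × X, g k p * (un n p.2 - un n p.1) ∂μ)
        ≤ ENNReal.ofReal (∫ p : X × X, |un n p.2 - un n p.1| ∂μ) :=
          ENNReal.ofReal_le_ofReal h1
      _ = ∫⁻ p : X × X, ENNReal.ofReal |un n p.2 - un n p.1| ∂μ :=
          MeasureTheory.ofReal_integral_eq_lintegral_ofReal habs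
            (ae_of_all _ fun p => abs_nonneg _)
      _ = nlEnergy m ν (un n) := hL1 _ (hun n).1
  -- Step 6: pass to the limit
  have hlim : ∀ k, ENNReal.ofReal (∫ p : X × X, g k p * (u p.2 - u p.1) ∂μ)
      ≤ Filter.liminf (fun n => nlEnergy m ν (un n)) atTop := by
    intro k
    have hT : Tendsto (fun n => ∫ p : X × X, g k p * (un n p.2 - un n p.1) ∂μ) atTop
        (𝓝 (∫ p : X × X, g k p * (u p.2 - u p.1) ∂μ)) := by
      have hw := hweak (φ k) (hφ2 k)
      rw [keypair u hu.1 hu2 hu.2 k] at hw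
      have he : ∀ n, ∫ x, un n x * φ k x ∂ν
          = ∫ p : X × X, g k p * (un n p.2 - un n p.1) ∂μ :=
        fun n => keypair (un n) (hun n).1 (hun2 n) (hun n).2 k
      simpa only [he] using hw
    have hT' : Tendsto (fun n =>
        ENNReal.ofReal (∫ p : X × X, g k p * (un n p.2 - un n p.1) ∂μ)) atTop
        (𝓝 (ENNReal.ofReal (∫ p : X × X, g k p * (u p.2 - u p.1) ∂μ))) :=
      (ENNReal.continuous_ofReal.tendsto _).comp hT
    rw [← hT'.liminf_eq]
    exact Filter.liminf_le_liminf (Filter.Eventually.of_forall fun n => hC2 k n)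
  -- Step 7: recover the energy of u as a supremum
  have heq : ∀ k, ENNReal.ofReal (∫ p : X × X, g k p * (u p.2 - u p.1) ∂μ)
      = ∫⁻ p : X × X, (E k).indicator (fun p : X × X => ENNReal.ofReal |u p.2 - u p.1|) p ∂μ := by
    intro k
    have hpt : ∀ p : X × X, g k p * (u p.2 - u p.1)
        = (E k).indicator (fun p : X × X => |u p.2 - u p.1|) p := by
      intro p
      by_cases hp : p ∈ E k
      · rw [Set.indicator_of_mem hp, hgdef]
        dsimp only
        rw [Set.indicator_of_mem hp, hsgndef]
        dsimp only
        rcases lt_trichotomy (u p.2 - u p.1) 0 with h | h | h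
        · rw [if_neg (by linarith), if_pos h, abs_of_neg h]; ring
        · rw [if_neg (by linarith), if_neg (by linarith), h, abs_zero, zero_mul]
        · rw [if_pos h, abs_of_pos h, one_mul]
      · rw [Set.indicator_of_notMem hp, hg0 k p hp, zero_mul]
    have hint : Integrable
        (fun p : X × X => (E k).indicator (fun p : X × X => |u p.2 - u p.1|) p) μ := by
      have := hgΔint u hu.1 hu.2 k
      simpa only [funext hpt] using this
    calc ENNReal.ofReal (∫ p : X × X, g k p * (u p.2 - u p.1) ∂μ)
        = ENNReal.ofReal (∫ p : X × X,
            (E k).indicator (fun p : X × X => |u p.2 - u p.1|) p ∂μ) := by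
          simp_rw [hpt]
      _ = ∫⁻ p : X × X, ENNReal.ofReal
            ((E k).indicator (fun p : X × X => |u p.2 - u p.1|) p) ∂μ :=
          MeasureTheory.ofReal_integral_eq_lintegral_ofReal hint
            (ae_of_all _ fun p => Set.indicator_nonneg (fun q _ => abs_nonneg _) p)
      _ = ∫⁻ p : X × X, (E k).indicator
            (fun p : X × X => ENNReal.ofReal |u p.2 - u p.1|) p ∂μ := by
          refine lintegral_congr fun p => ?_
          by_cases hp : p ∈ E k
          · rw [Set.indicator_of_mem hp, Set.indicator_of_mem hp]
          · rw [Set.indicator_of_notMem hp, Set.indicator_of_notMem hp, ENNReal.ofReal_zero]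
  have hsup : nlEnergy m ν u
      ≤ ⨆ k, ENNReal.ofReal (∫ p : X × X, g k p * (u p.2 - u p.1) ∂μ) := by
    have hmono : Monotone fun k => (E k).indicator
        (fun p : X × X => ENNReal.ofReal |u p.2 - u p.1|) := by
      intro k l hkl
      refine Set.indicator_le_indicator_of_subset ?_ (fun p => zero_le)
      exact Set.prod_mono (monotone_spanningSets ν hkl) (monotone_spanningSets ν hkl)
    have hsuppt : ∀ p : X × X, ENNReal.ofReal |u p.2 - u p.1|
        = ⨆ k, (E k).indicator (fun p : X × X => ENNReal.ofReal |u p.2 - u p.1|) p := by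
      intro p
      obtain ⟨i, hi⟩ : ∃ i, p.1 ∈ A i := by
        have := MeasureTheory.iUnion_spanningSets ν
        have hmem : p.1 ∈ ⋃ i, spanningSets ν i := this ▸ Set.mem_univ p.1
        exact Set.mem_iUnion.mp hmem
      obtain ⟨j, hj⟩ : ∃ j, p.2 ∈ A j := by
        have := MeasureTheory.iUnion_spanningSets ν
        have hmem : p.2 ∈ ⋃ i, spanningSets ν i := this ▸ Set.mem_univ p.2
        exact Set.mem_iUnion.mp hmem
      refine le_antisymm ?_ (iSup_le fun k => Set.indicator_le_self _ _ p)
      refine le_iSup_of_le (max i j) ?_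
      have hpmem : p ∈ E (max i j) :=
        ⟨monotone_spanningSets ν (le_max_left i j) hi,
         monotone_spanningSets ν (le_max_right i j) hj⟩
      rw [Set.indicator_of_mem hpmem]
    calc nlEnergy m ν u = ∫⁻ p : X × X, ENNReal.ofReal |u p.2 - u p.1| ∂μ := (hL1 u hu.1).symm
      _ = ∫⁻ p : X × X, ⨆ k, (E k).indicator
            (fun p : X × X => ENNReal.ofReal |u p.2 - u p.1|) p ∂μ :=
          lintegral_congr hsuppt
      _ = ⨆ k, ∫⁻ p : X × X, (E k).indicator
            (fun p : X × X => ENNReal.ofReal |u p.2 - u p.1|) p ∂μ :=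
          lintegral_iSup
            (fun k => (((hu.1.comp measurable_snd).sub
              (hu.1.comp measurable_fst)).abs.ennreal_ofReal).indicator (hEmeas k))
            hmono
      _ ≤ ⨆ k, ENNReal.ofReal (∫ p : X × X, g k p * (u p.2 - u p.1) ∂μ) :=
          le_of_eq (iSup_congr fun k => (heq k).symm)
  -- Step 8: conclusion
  have hfinal : nlEnergy m ν u ≤ Filter.liminf (fun n => nlEnergy m ν (un n)) atTop :=
    hsup.trans (iSup_le hlim)
  calc TVm m ν u = 2⁻¹ * nlEnergy m ν u := rfl
    _ ≤ 2⁻¹ * Filter.liminf (fun n => nlEnergy m ν (un n)) atTop :=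
        mul_le_mul_right hfinal _
    _ ≤ Filter.liminf (fun n => 2⁻¹ * nlEnergy m ν (un n)) atTop := by
        have h := ENNReal.le_liminf_mul (f := (atTop : Filter ℕ))
          (u := fun _ : ℕ => (2⁻¹ : ℝ≥0∞)) (v := fun n => nlEnergy m ν (un n))
        simpa [Filter.liminf_const, Pi.mul_def] using h
    _ = Filter.liminf (fun n => TVm m ν (un n)) atTop := rfl
end

section
/- Let [X,d,m] be a metric random walk space with an invariant and reversible σ-finite measure ν, let n ≥ 1 (with the convention that n/(n−1) = ∞ and L^{n/(n−1)} = L^∞ when n = 1), and let I_n > 0. Then ν(A)^{(n−1)/n} ≤ I_n · P_m(A) for every ν-measurable A ⊂ X with 0 < ν(A) < ν(X) if and only if ‖u‖_{L^{n/(n−1)}(X,ν)} ≤ I_n · TV_m(u) for every u ∈ BV_m^0(X,ν). -/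
open MeasureTheory ENNReal Filter Set Topology

section Aux

variable {X : Type*} [MeasurableSpace X]

/-- Key real inequality for splitting into positive and negative parts. -/
private lemma abs_posPart_aux (a b : ℝ) :
    |max a 0 - max b 0| + |max (-a) 0 - max (-b) 0| ≤ |a - b| := by
  rcases le_total a 0 with ha | ha <;> rcases le_total b 0 with hb | hb
  · rw [max_eq_right ha, max_eq_right hb, max_eq_left (neg_nonneg.2 ha),
      max_eq_left (neg_nonneg.2 hb)]
    rw [sub_self, abs_zero, zero_add, show -a - -b = -(a - b) by ring, abs_neg]
  · rw [max_eq_right ha, max_eq_left hb, max_eq_left (neg_nonneg.2 ha),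
      max_eq_right (neg_nonpos.2 hb)]
    rw [abs_of_nonpos (by linarith : (0:ℝ) - b ≤ 0),
      abs_of_nonneg (by linarith : (0:ℝ) ≤ -a - 0), abs_of_nonpos (by linarith : a - b ≤ 0)]
    linarith
  · rw [max_eq_left ha, max_eq_right hb, max_eq_right (neg_nonpos.2 ha),
      max_eq_left (neg_nonneg.2 hb)]
    rw [abs_of_nonneg (by linarith : (0:ℝ) ≤ a - 0),
      abs_of_nonpos (by linarith : (0:ℝ) - -b ≤ 0), abs_of_nonneg (by linarith : (0:ℝ) ≤ a - b)]
    linarith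
  · rw [max_eq_left ha, max_eq_left hb, max_eq_right (neg_nonpos.2 ha),
      max_eq_right (neg_nonpos.2 hb)]
    simp

private lemma lintegral_indicator_Ico {a b : ℝ} (ha : 0 ≤ a) :
    ∫⁻ t in Set.Ioi (0:ℝ), (Set.Ico a b).indicator (fun _ => (1:ℝ≥0∞)) t
      = ENNReal.ofReal (b - a) := by
  rw [MeasureTheory.lintegral_indicator measurableSet_Ico,
    MeasureTheory.Measure.restrict_restrict measurableSet_Ico, MeasureTheory.setLIntegral_one]
  rcases le_total b a with h | h
  · rw [Set.Ico_eq_empty (by exact fun hh => absurd h (not_le.2 hh)), Set.empty_inter,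
      measure_empty, ENNReal.ofReal_of_nonpos (by linarith)]
  · refine le_antisymm ?_ ?_
    · calc volume (Set.Ico a b ∩ Set.Ioi 0) ≤ volume (Set.Ico a b) :=
            measure_mono Set.inter_subset_left
        _ = ENNReal.ofReal (b - a) := Real.volume_Ico
    · calc ENNReal.ofReal (b - a) = volume (Set.Ioo a b) := Real.volume_Ioo.symm
        _ ≤ volume (Set.Ico a b ∩ Set.Ioi 0) := by
            refine measure_mono fun t ht => ⟨⟨ht.1.le, ht.2⟩, lt_of_le_of_lt ha ht.1⟩

end Aux
section Aux2

open Function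

variable {X : Type*} [MeasurableSpace X]

/-- Measurability of `a ↦ ∫⁻ y, f a y ∂(m (g a))` for a measurable kernel `m`. -/
private lemma measurable_kernel_lint {m : X → Measure X}
    (hprob : ∀ x, IsProbabilityMeasure (m x)) (hker : MeasurableKernel m)
    {Y : Type*} [MeasurableSpace Y] {g : Y → X} (hg : Measurable g)
    {f : Y × X → ℝ≥0∞} (hf : Measurable f) :
    Measurable fun a => ∫⁻ b, f (a, b) ∂(m (g a)) := by
  have hm : Measurable m := Measure.measurable_of_measurable_coe m fun s hs => hker s hs
  let κ : ProbabilityTheory.Kernel X X := ⟨m, hm⟩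
  have hMarkov : ProbabilityTheory.IsMarkovKernel κ := ⟨hprob⟩
  have : ProbabilityTheory.IsMarkovKernel (κ.comap g hg) := by
    refine ⟨fun a => ?_⟩
    rw [ProbabilityTheory.Kernel.comap_apply]
    exact hprob (g a)
  have h := Measurable.lintegral_kernel_prod_right' (κ := κ.comap g hg) hf
  exact h

/-- The layer-cake integrand. -/
private noncomputable def layerInd (v : X → ℝ) (t : ℝ) (x y : X) : ℝ≥0∞ :=
  (if t < v x then 1 else 0) * (if t < v y then 0 else 1)
    + (if t < v x then 0 else 1) * (if t < v y then 1 else 0)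

private lemma measurable_layerInd {v : X → ℝ} (hv : Measurable v) :
    Measurable fun p : (X × ℝ) × X => layerInd v p.1.2 p.1.1 p.2 := by
  have h1 : MeasurableSet {p : (X × ℝ) × X | p.1.2 < v p.1.1} :=
    measurableSet_lt (measurable_fst.snd) (hv.comp measurable_fst.fst)
  have h2 : MeasurableSet {p : (X × ℝ) × X | p.1.2 < v p.2} :=
    measurableSet_lt (measurable_fst.snd) (hv.comp measurable_snd)
  unfold layerInd
  exact ((Measurable.ite h1 measurable_const measurable_const).mul
      (Measurable.ite h2 measurable_const measurable_const)).add
    ((Measurable.ite h1 measurable_const measurable_const).mul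
      (Measurable.ite h2 measurable_const measurable_const))

private lemma layerInd_symm (v : X → ℝ) (t : ℝ) (x y : X) :
    layerInd v t x y = layerInd v t y x := by
  unfold layerInd; ring

private lemma lintegral_layerInd_aux {v : X → ℝ} (hv0 : ∀ x, 0 ≤ v x) {x y : X}
    (hxy : v x ≤ v y) :
    ∫⁻ t in Set.Ioi (0:ℝ), layerInd v t x y = ENNReal.ofReal |v y - v x| := by
  have : ∀ t : ℝ, layerInd v t x y = (Set.Ico (v x) (v y)).indicator (fun _ => (1:ℝ≥0∞)) t := by
    intro t
    by_cases h1 : t < v x <;> by_cases h2 : t < v y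
    · simp [layerInd, h1, h2, Set.indicator_apply, Set.mem_Ico, not_le.mpr h1]
    · exact absurd (lt_of_lt_of_le h1 hxy) h2
    · simp [layerInd, h1, h2, Set.indicator_apply, Set.mem_Ico, not_lt.mp h1]
    · simp [layerInd, h1, h2, Set.indicator_apply, Set.mem_Ico]
  calc ∫⁻ t in Set.Ioi (0:ℝ), layerInd v t x y
      = ∫⁻ t in Set.Ioi (0:ℝ), (Set.Ico (v x) (v y)).indicator (fun _ => (1:ℝ≥0∞)) t := by
        exact lintegral_congr fun t => this t
    _ = ENNReal.ofReal (v y - v x) := lintegral_indicator_Ico (hv0 x)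
    _ = ENNReal.ofReal |v y - v x| := by rw [abs_of_nonneg (sub_nonneg.2 hxy)]

private lemma lintegral_layerInd {v : X → ℝ} (hv0 : ∀ x, 0 ≤ v x) (x y : X) :
    ENNReal.ofReal |v y - v x| = ∫⁻ t in Set.Ioi (0:ℝ), layerInd v t x y := by
  rcases le_total (v x) (v y) with h | h
  · exact (lintegral_layerInd_aux hv0 h).symm
  · rw [abs_sub_comm]
    have := lintegral_layerInd_aux hv0 h (x := y) (y := x)
    rw [← this]
    exact lintegral_congr fun t => (layerInd_symm v t x y).symm

end Aux2
section Aux3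

open Function

variable {X : Type*} [MeasurableSpace X] {m : X → Measure X} {ν : Measure X}

private lemma lm_compl (hrev : Reversible m ν) {E : Set X} (hE : MeasurableSet E) :
    Lm m ν Eᶜ E = Pm m ν E := by
  have hF : Measurable (Function.uncurry fun x y =>
      Eᶜ.indicator (1 : X → ℝ≥0∞) x * E.indicator (1 : X → ℝ≥0∞) y) :=
    ((measurable_const.indicator hE.compl).comp measurable_fst).mul
      ((measurable_const.indicator hE).comp measurable_snd)
  have h := hrev _ hF
  calc Lm m ν Eᶜ E = ∫⁻ x, Eᶜ.indicator (fun x => m x E) x ∂ν :=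
        (lintegral_indicator hE.compl _).symm
    _ = ∫⁻ x, ∫⁻ y, Eᶜ.indicator (1 : X → ℝ≥0∞) x * E.indicator (1 : X → ℝ≥0∞) y
          ∂(m x) ∂ν := by
        refine lintegral_congr fun x => ?_
        rw [lintegral_const_mul' _ _ (by by_cases hx : x ∈ Eᶜ <;> simp [hx]),
          lintegral_indicator_one hE]
        by_cases hx : x ∈ Eᶜ <;> simp [hx]
    _ = ∫⁻ y, ∫⁻ x, Eᶜ.indicator (1 : X → ℝ≥0∞) x * E.indicator (1 : X → ℝ≥0∞) y
          ∂(m y) ∂ν := h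
    _ = ∫⁻ y, E.indicator (fun y => m y Eᶜ) y ∂ν := by
        refine lintegral_congr fun y => ?_
        rw [lintegral_mul_const' _ _ (by by_cases hy : y ∈ E <;> simp [hy]),
          lintegral_indicator_one hE.compl]
        by_cases hy : y ∈ E <;> simp [hy]
    _ = Pm m ν E := lintegral_indicator hE _

private lemma double_ind_eq (hker : MeasurableKernel m) (hrev : Reversible m ν)
    {E : Set X} (hE : MeasurableSet E) :
    ∫⁻ x, ∫⁻ y, (E.indicator (1 : X → ℝ≥0∞) x * Eᶜ.indicator (1 : X → ℝ≥0∞) y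
      + Eᶜ.indicator (1 : X → ℝ≥0∞) x * E.indicator (1 : X → ℝ≥0∞) y) ∂(m x) ∂ν
      = 2 * Pm m ν E := by
  have inner : ∀ x, ∫⁻ y, (E.indicator (1 : X → ℝ≥0∞) x * Eᶜ.indicator (1 : X → ℝ≥0∞) y
      + Eᶜ.indicator (1 : X → ℝ≥0∞) x * E.indicator (1 : X → ℝ≥0∞) y) ∂(m x)
      = E.indicator (1 : X → ℝ≥0∞) x * m x Eᶜ
        + Eᶜ.indicator (1 : X → ℝ≥0∞) x * m x E := by
    intro x
    rw [lintegral_add_left (f := fun y => E.indicator (1 : X → ℝ≥0∞) x * Eᶜ.indicator (1 : X → ℝ≥0∞) y) (measurable_const.mul (measurable_one.indicator hE.compl)),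
      lintegral_const_mul' _ _ (by by_cases hx : x ∈ E <;> simp [hx]),
      lintegral_const_mul' _ _ (by by_cases hx : x ∈ Eᶜ <;> simp [hx]),
      lintegral_indicator_one hE.compl, lintegral_indicator_one hE]
  calc ∫⁻ x, ∫⁻ y, (E.indicator (1 : X → ℝ≥0∞) x * Eᶜ.indicator (1 : X → ℝ≥0∞) y
        + Eᶜ.indicator (1 : X → ℝ≥0∞) x * E.indicator (1 : X → ℝ≥0∞) y) ∂(m x) ∂ν
      = ∫⁻ x, (E.indicator (1 : X → ℝ≥0∞) x * m x Eᶜ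
          + Eᶜ.indicator (1 : X → ℝ≥0∞) x * m x E) ∂ν := lintegral_congr inner
    _ = (∫⁻ x, E.indicator (1 : X → ℝ≥0∞) x * m x Eᶜ ∂ν)
        + ∫⁻ x, Eᶜ.indicator (1 : X → ℝ≥0∞) x * m x E ∂ν :=
        lintegral_add_left ((measurable_one.indicator hE).mul (hker Eᶜ hE.compl)) _
    _ = Pm m ν E + Lm m ν Eᶜ E := by
        congr 1
        · rw [show (fun x => E.indicator (1 : X → ℝ≥0∞) x * m x Eᶜ)
              = fun x => E.indicator (fun x => m x Eᶜ) x by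
                funext x; by_cases hx : x ∈ E <;> simp [hx]]
          exact lintegral_indicator hE _
        · rw [show (fun x => Eᶜ.indicator (1 : X → ℝ≥0∞) x * m x E)
              = fun x => Eᶜ.indicator (fun x => m x E) x by
                funext x; by_cases hx : x ∈ Eᶜ <;> simp [hx]]
          exact lintegral_indicator hE.compl _
    _ = 2 * Pm m ν E := by rw [lm_compl hrev hE, two_mul]

private lemma double_layer_eq (hker : MeasurableKernel m) (hrev : Reversible m ν)
    {v : X → ℝ} (hv : Measurable v) (t : ℝ) :
    ∫⁻ x, ∫⁻ y, layerInd v t x y ∂(m x) ∂ν = 2 * Pm m ν {z | t < v z} := by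
  set E := {z | t < v z} with hEdef
  have hE : MeasurableSet E := measurableSet_lt measurable_const hv
  have e1 : ∀ x y, layerInd v t x y
      = E.indicator (1 : X → ℝ≥0∞) x * Eᶜ.indicator (1 : X → ℝ≥0∞) y
        + Eᶜ.indicator (1 : X → ℝ≥0∞) x * E.indicator (1 : X → ℝ≥0∞) y := by
    intro x y
    by_cases h1 : t < v x <;> by_cases h2 : t < v y <;>
      simp [layerInd, h1, h2, Set.indicator_apply, hEdef]
  rw [lintegral_congr fun x => lintegral_congr fun y => e1 x y]
  exact double_ind_eq hker hrev hE

private lemma coarea (hprob : ∀ x, IsProbabilityMeasure (m x)) (hker : MeasurableKernel m)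
    [SigmaFinite ν] (hrev : Reversible m ν)
    {v : X → ℝ} (hv : Measurable v) (hv0 : ∀ x, 0 ≤ v x) :
    TVm m ν v = ∫⁻ t in Set.Ioi (0:ℝ), Pm m ν {z | t < v z} := by
  have hjm := measurable_layerInd (v := v) hv
  have key : nlEnergy m ν v = ∫⁻ t in Set.Ioi (0:ℝ), 2 * Pm m ν {z | t < v z} := by
    calc nlEnergy m ν v
        = ∫⁻ x, ∫⁻ y, (∫⁻ t in Set.Ioi (0:ℝ), layerInd v t x y) ∂(m x) ∂ν :=
          lintegral_congr fun x => lintegral_congr fun y => lintegral_layerInd hv0 x y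
      _ = ∫⁻ x, (∫⁻ t in Set.Ioi (0:ℝ), ∫⁻ y, layerInd v t x y ∂(m x)) ∂ν := by
          refine lintegral_congr fun x => ?_
          haveI := hprob x
          exact lintegral_lintegral_swap (f := fun y t => layerInd v t x y)
            ((hjm.comp ((measurable_const.prodMk measurable_snd).prodMk
              measurable_fst)).aemeasurable)
      _ = ∫⁻ t in Set.Ioi (0:ℝ), ∫⁻ x, (∫⁻ y, layerInd v t x y ∂(m x)) ∂ν := lintegral_lintegral_swap (f := fun x t => ∫⁻ y, layerInd v t x y ∂(m x))
            ((measurable_kernel_lint hprob hker measurable_fst hjm).aemeasurable)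
      _ = ∫⁻ t in Set.Ioi (0:ℝ), 2 * Pm m ν {z | t < v z} :=
          lintegral_congr fun t => double_layer_eq hker hrev hv t
  rw [TVm, key, lintegral_const_mul' 2 _ (by norm_num), ← mul_assoc,
    ENNReal.inv_mul_cancel (by norm_num) (by norm_num), one_mul]

end Aux3
section Aux4

variable {X : Type*} [MeasurableSpace X] {ν : Measure X}

private lemma lp_le_layer [SigmaFinite ν] {v : X → ℝ} (hv : Measurable v)
    (hv0 : ∀ x, 0 ≤ v x) {q : ℝ} (hq : 1 < q) {C : ℝ≥0∞} (hC : C ≠ ⊤)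
    (hsupp : ∀ t : ℝ, 0 < t → ν {x | t < v x} ≤ C) :
    (∫⁻ x, ENNReal.ofReal (v x) ^ q ∂ν) ^ (1/q)
      ≤ ∫⁻ t in Set.Ioi (0:ℝ), (ν {x | t < v x}) ^ (1/q) := by
  set S := ∫⁻ t in Set.Ioi (0:ℝ), (ν {x | t < v x}) ^ (1/q) with hS
  have hq0 : (0:ℝ) < q := by linarith
  have hq1 : (0:ℝ) < 1/q := by positivity
  have hsub : (0:ℝ) ≤ 1 - 1/q := by
    have : 1/q ≤ 1 := by rw [div_le_one hq0]; linarith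
    linarith
  have hqq : q.HolderConjugate (q/(q-1)) := (Real.holderConjugate_iff_eq_conjExponent hq).2 rfl
  have hrpow_meas : ∀ r : ℝ, Measurable fun z : ℝ≥0∞ => z ^ r := fun r =>
    (ENNReal.continuous_rpow_const).measurable
  have key : ∀ k : ℕ, (∫⁻ x, ENNReal.ofReal (min (v x) k) ^ q ∂ν) ^ (1/q) ≤ S := by
    intro k
    set w : X → ℝ := fun x => min (v x) k with hwdef
    have hwm : Measurable w := hv.min measurable_const
    have hw0 : ∀ x, 0 ≤ w x := fun x => le_min (hv0 x) (Nat.cast_nonneg k)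
    have hwv : ∀ x, w x ≤ v x := fun x => min_le_left _ _
    have hwk : ∀ x, w x ≤ k := fun x => min_le_right _ _
    set N := ∫⁻ x, ENNReal.ofReal (w x) ^ q ∂ν with hN
    have hgm : Measurable fun x => ENNReal.ofReal (w x) ^ (q-1) :=
      (hrpow_meas (q-1)).comp (ENNReal.measurable_ofReal.comp hwm)
    have hNfin : N ≠ ⊤ := by
      have h1 : N = ∫⁻ x, ENNReal.ofReal (w x ^ q) ∂ν :=
        lintegral_congr fun x => by rw [ENNReal.ofReal_rpow_of_nonneg (hw0 x) hq0.le]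
      rw [h1, lintegral_rpow_eq_lintegral_meas_lt_mul ν (ae_of_all _ hw0) hwm.aemeasurable hq0]
      refine ENNReal.mul_ne_top ENNReal.ofReal_ne_top ?_
      have hb : ∫⁻ t in Set.Ioi (0:ℝ), ν {a | t < w a} * ENNReal.ofReal (t ^ (q-1))
          ≤ ∫⁻ t in Set.Ioi (0:ℝ),
              (Set.Iio (k:ℝ)).indicator (fun _ => C * ENNReal.ofReal ((k:ℝ) ^ (q-1))) t := by
        refine lintegral_mono_ae ?_
        filter_upwards [ae_restrict_mem measurableSet_Ioi] with t ht
        rcases lt_or_ge t k with htk | htk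
        · rw [Set.indicator_of_mem (show t ∈ Set.Iio (k:ℝ) from htk)]
          refine mul_le_mul' ?_ ?_
          · exact le_trans (measure_mono fun x hx => lt_of_lt_of_le hx (hwv x)) (hsupp t ht)
          · exact ENNReal.ofReal_le_ofReal (Real.rpow_le_rpow (le_of_lt ht) htk.le (by linarith))
        · rw [Set.indicator_of_notMem (by simpa using htk)]
          have hemp : {a | t < w a} = ∅ :=
            Set.eq_empty_iff_forall_notMem.2 fun x hx => absurd hx (not_lt.2 ((hwk x).trans htk))
          simp [hemp]
      refine ne_of_lt (lt_of_le_of_lt hb ?_)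
      rw [lintegral_indicator measurableSet_Iio, Measure.restrict_restrict measurableSet_Iio,
        setLIntegral_const, Set.Iio_inter_Ioi, Real.volume_Ioo]
      exact ENNReal.mul_lt_top
        (ENNReal.mul_lt_top hC.lt_top ENNReal.ofReal_lt_top) ENNReal.ofReal_lt_top
    have hind : ∀ t : ℝ, ∫⁻ x, (if t < w x then (1:ℝ≥0∞) else 0) ^ q ∂ν = ν {x | t < w x} := by
      intro t
      have h : ∀ x, (if t < w x then (1:ℝ≥0∞) else 0) ^ q
          = {x | t < w x}.indicator (1 : X → ℝ≥0∞) x := by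
        intro x
        by_cases h : t < w x <;>
          simp [h, Set.indicator_apply, ENNReal.zero_rpow_of_pos hq0]
      rw [lintegral_congr h, lintegral_indicator_one (measurableSet_lt measurable_const hwm)]
    have hgq : ∫⁻ x, (ENNReal.ofReal (w x) ^ (q-1)) ^ (q/(q-1)) ∂ν = N := by
      refine lintegral_congr fun x => ?_
      rw [← ENNReal.rpow_mul]
      congr 1
      rw [mul_comm]; exact div_mul_cancel₀ q (sub_ne_zero.mpr (ne_of_gt hq))
    have hconj : 1/(q/(q-1)) = 1 - 1/q := by
      rw [one_div_div, eq_sub_iff_add_eq, ← add_div, sub_add_cancel, div_self hq0.ne']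
    have main : N ≤ S * N ^ (1 - 1/q) := by
      have hrep : ∀ x, ENNReal.ofReal (w x) ^ q
          = (∫⁻ t in Set.Ioi (0:ℝ), (if t < w x then (1:ℝ≥0∞) else 0))
            * ENNReal.ofReal (w x) ^ (q - 1) := by
        intro x
        have h2 : (∫⁻ t in Set.Ioi (0:ℝ), (if t < w x then (1:ℝ≥0∞) else 0))
            = ENNReal.ofReal (w x) := by
          have h3 : ∀ t ∈ Set.Ioi (0:ℝ), (if t < w x then (1:ℝ≥0∞) else 0)
              = (Set.Ico (0:ℝ) (w x)).indicator (fun _ => (1:ℝ≥0∞)) t := by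
            intro t ht
            by_cases h : t < w x
            · rw [if_pos h, Set.indicator_of_mem (Set.mem_Ico.mpr ⟨le_of_lt ht, h⟩)]
            · rw [if_neg h, Set.indicator_of_notMem fun hm => h hm.2]
          rw [setLIntegral_congr_fun measurableSet_Ioi h3,
            lintegral_indicator_Ico le_rfl, sub_zero]
        rw [h2]
        by_cases h0 : w x = 0
        · simp [h0, ENNReal.zero_rpow_of_pos hq0,
            ENNReal.zero_rpow_of_pos (by linarith : (0:ℝ) < q-1)]
        · have ha0 : ENNReal.ofReal (w x) ≠ 0 := by
            simp only [ne_eq, ENNReal.ofReal_eq_zero, not_le]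
            exact lt_of_le_of_ne (hw0 x) (Ne.symm h0)
          calc ENNReal.ofReal (w x) ^ q = ENNReal.ofReal (w x) ^ ((1:ℝ) + (q-1)) := by ring_nf
            _ = ENNReal.ofReal (w x) ^ (1:ℝ) * ENNReal.ofReal (w x) ^ (q-1) :=
                ENNReal.rpow_add _ _ ha0 ENNReal.ofReal_ne_top
            _ = ENNReal.ofReal (w x) * ENNReal.ofReal (w x) ^ (q-1) := by
                rw [ENNReal.rpow_one]
      calc N = ∫⁻ x, (∫⁻ t in Set.Ioi (0:ℝ), (if t < w x then (1:ℝ≥0∞) else 0))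
            * ENNReal.ofReal (w x) ^ (q-1) ∂ν := lintegral_congr hrep
        _ = ∫⁻ x, (∫⁻ t in Set.Ioi (0:ℝ), (if t < w x then (1:ℝ≥0∞) else 0)
              * ENNReal.ofReal (w x) ^ (q-1)) ∂ν := by
            refine lintegral_congr fun x => ?_
            exact (lintegral_mul_const' _ _
              (ENNReal.rpow_ne_top_of_nonneg (by linarith) ENNReal.ofReal_ne_top)).symm
        _ = ∫⁻ t in Set.Ioi (0:ℝ), ∫⁻ x, (if t < w x then (1:ℝ≥0∞) else 0)
              * ENNReal.ofReal (w x) ^ (q-1) ∂ν := by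
            refine lintegral_lintegral_swap ?_
            have hset : MeasurableSet {p : X × ℝ | p.2 < w p.1} :=
              measurableSet_lt measurable_snd (hwm.comp measurable_fst)
            exact ((Measurable.ite hset measurable_const measurable_const).mul
              (hgm.comp measurable_fst)).aemeasurable
        _ ≤ ∫⁻ t in Set.Ioi (0:ℝ), (ν {x | t < v x}) ^ (1/q) * N ^ (1 - 1/q) := by
            refine lintegral_mono fun t => ?_
            have hold := ENNReal.lintegral_mul_le_Lp_mul_Lq ν hqq
              ((Measurable.ite (measurableSet_lt measurable_const hwm)
                measurable_const measurable_const).aemeasurable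
                  (μ := ν) (f := fun x => if t < w x then (1:ℝ≥0∞) else 0))
                hgm.aemeasurable
            rw [hind t, hgq, hconj] at hold
            refine le_trans hold (mul_le_mul' ?_ le_rfl)
            exact ENNReal.rpow_le_rpow
              (measure_mono fun x hx => lt_of_lt_of_le hx (hwv x)) hq1.le
        _ = S * N ^ (1 - 1/q) :=
            lintegral_mul_const' _ _ (ENNReal.rpow_ne_top_of_nonneg hsub hNfin)
    by_cases hN0 : N = 0
    · rw [hN0]
      rw [ENNReal.zero_rpow_of_pos hq1]
      exact zero_le
    · have hsplit : N = N ^ (1/q) * N ^ (1 - 1/q) := by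
        rw [← ENNReal.rpow_add _ _ hN0 hNfin, show 1/q + (1-1/q) = 1 by ring,
          ENNReal.rpow_one]
      have hc0 : N ^ (1 - 1/q) ≠ 0 :=
        (ENNReal.rpow_pos (zero_lt_iff.mpr hN0) hNfin).ne'
      have hct : N ^ (1 - 1/q) ≠ ⊤ := ENNReal.rpow_ne_top_of_nonneg hsub hNfin
      have hmain : N ^ (1/q) * N ^ (1 - 1/q) ≤ S * N ^ (1 - 1/q) := by
        rw [← hsplit]; exact main
      exact (ENNReal.mul_le_mul_iff_left hc0 hct).mp hmain
  have hmeask : ∀ k : ℕ, Measurable fun x => ENNReal.ofReal (min (v x) k) ^ q := fun k =>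
    (hrpow_meas q).comp (ENNReal.measurable_ofReal.comp (hv.min measurable_const))
  have hmono : Monotone fun k : ℕ => fun x => ENNReal.ofReal (min (v x) (k:ℝ)) ^ q := by
    intro k1 k2 hk x
    exact ENNReal.rpow_le_rpow
      (ENNReal.ofReal_le_ofReal (min_le_min le_rfl (Nat.cast_le.2 hk))) hq0.le
  have hlim : ∫⁻ x, ENNReal.ofReal (v x) ^ q ∂ν
      = ⨆ k : ℕ, ∫⁻ x, ENNReal.ofReal (min (v x) k) ^ q ∂ν := by
    rw [← lintegral_iSup hmeask hmono]
    refine lintegral_congr fun x => ?_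
    refine (le_antisymm (iSup_le fun k =>
      ENNReal.rpow_le_rpow (ENNReal.ofReal_le_ofReal (min_le_left _ _)) hq0.le)
      (le_iSup_of_le ⌈v x⌉₊ (le_of_eq (by rw [min_eq_left (Nat.le_ceil _)])))).symm
  have hkq : ∀ k : ℕ, ∫⁻ x, ENNReal.ofReal (min (v x) k) ^ q ∂ν ≤ S ^ q := by
    intro k
    calc ∫⁻ x, ENNReal.ofReal (min (v x) k) ^ q ∂ν
        = ((∫⁻ x, ENNReal.ofReal (min (v x) k) ^ q ∂ν) ^ (1/q)) ^ q := by
          rw [← ENNReal.rpow_mul, one_div, inv_mul_cancel₀ hq0.ne', ENNReal.rpow_one]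
      _ ≤ S ^ q := ENNReal.rpow_le_rpow (key k) hq0.le
  calc (∫⁻ x, ENNReal.ofReal (v x) ^ q ∂ν) ^ (1/q)
      = (⨆ k : ℕ, ∫⁻ x, ENNReal.ofReal (min (v x) k) ^ q ∂ν) ^ (1/q) := by rw [hlim]
    _ ≤ (S ^ q) ^ (1/q) := ENNReal.rpow_le_rpow (iSup_le hkq) hq1.le
    _ = S := by rw [← ENNReal.rpow_mul, mul_one_div, div_self hq0.ne', ENNReal.rpow_one]

end Aux4
section Aux5

variable {X : Type*} [MeasurableSpace X] {m : X → Measure X} {ν : Measure X}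

private lemma tv_split (u : X → ℝ) :
    TVm m ν (fun x => max (u x) 0) + TVm m ν (fun x => max (-u x) 0) ≤ TVm m ν u := by
  unfold TVm
  rw [← mul_add]
  refine mul_le_mul_right ?_ _
  unfold nlEnergy
  refine le_trans (le_lintegral_add _ _) (lintegral_mono fun x => ?_)
  refine le_trans (le_lintegral_add _ _) (lintegral_mono fun y => ?_)
  rw [← ENNReal.ofReal_add (abs_nonneg _) (abs_nonneg _)]
  exact ENNReal.ofReal_le_ofReal (abs_posPart_aux _ _)

private lemma meas_level_le {u : X → ℝ} {A : Set X} (hae : ∀ᵐ x ∂ν, x ∉ A → u x = 0)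
    {v : X → ℝ} (hvu : ∀ x, u x = 0 → v x = 0) {t : ℝ} (ht : 0 < t) :
    ν {x | t < v x} ≤ ν A := by
  have h0 : ν {x | x ∉ A ∧ ¬u x = 0} = 0 := by
    rw [MeasureTheory.ae_iff] at hae
    rw [show {x | x ∉ A ∧ ¬u x = 0} = {x | ¬(x ∉ A → u x = 0)} by
      ext x; simp [Classical.not_imp]]
    exact hae
  have hsub : {x | t < v x} ⊆ A ∪ {x | x ∉ A ∧ ¬u x = 0} := by
    intro x hx
    by_cases hxA : x ∈ A
    · exact Or.inl hxA
    · refine Or.inr ⟨hxA, fun h => ?_⟩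
      rw [Set.mem_setOf_eq, hvu x h] at hx
      exact absurd hx (not_lt.2 ht.le)
  refine le_trans (measure_mono hsub) ?_
  refine le_trans (measure_union_le _ _) ?_
  rw [h0, add_zero]

private lemma p_top_of_one : ((1:ℕ) : ℝ≥0∞) / (((1:ℕ) : ℝ≥0∞) - 1) = ⊤ := by
  norm_num

private lemma p_eq_ofReal {n : ℕ} (hn2 : 1 < n) :
    ((n : ℝ≥0∞)) / ((n : ℝ≥0∞) - 1) = ENNReal.ofReal ((n:ℝ)/((n:ℝ)-1)) := by
  have hnR : (2:ℝ) ≤ (n:ℝ) := by exact_mod_cast hn2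
  have hnpos : (0:ℝ) < (n:ℝ) - 1 := by linarith
  rw [ENNReal.ofReal_div_of_pos hnpos, ENNReal.ofReal_natCast,
    show ((n:ℝ) - 1) = (((n - 1 : ℕ)):ℝ) by
      rw [Nat.cast_sub (le_of_lt hn2), Nat.cast_one],
    ENNReal.ofReal_natCast, ENNReal.natCast_sub, Nat.cast_one]

private lemma exp_toReal {n : ℕ} (hn : 1 ≤ n) :
    1 / (((n : ℝ≥0∞)) / ((n : ℝ≥0∞) - 1)).toReal = ((n:ℝ) - 1) / (n:ℝ) := by
  rcases eq_or_lt_of_le hn with h1 | h2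
  · rw [← h1]
    rw [p_top_of_one]
    norm_num
  · have hnR : (2:ℝ) ≤ (n:ℝ) := by exact_mod_cast h2
    have hnpos : (0:ℝ) < (n:ℝ) - 1 := by linarith
    rw [p_eq_ofReal h2, ENNReal.toReal_ofReal (by positivity), one_div_div]

end Aux5

/-- `[X,d,m,ν]` has isoperimetric dimension `n` (with constant `I`) if and only if the
Sobolev inequality `‖u‖_{L^{n/(n−1)}(X,ν)} ≤ I · TV_m(u)` holds for all `u ∈ BV_m^0(X,ν)`.
For `n = 1` the exponent `(n−1)/n` is `0` and `n/(n−1) = ∞` (in `ℝ≥0∞`). -/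
theorem isoperimetric_iff_sobolev
    {X : Type*} [MetricSpace X] [PolishSpace X] [MeasurableSpace X] [BorelSpace X]
    (m : X → Measure X) (hprob : ∀ x, IsProbabilityMeasure (m x))
    (hker : MeasurableKernel m)
    (ν : Measure X) [SigmaFinite ν] (hrev : Reversible m ν)
    (n : ℕ) (hn : 1 ≤ n) (I : ℝ) (hI : 0 < I) :
    (∀ A : Set X, MeasurableSet A → 0 < ν A → ν A < ν Set.univ →
        ν A ^ (((n : ℝ) - 1) / n) ≤ ENNReal.ofReal I * Pm m ν A) ↔
      (∀ u : X → ℝ, MemBVm0 m ν u →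
        eLpNorm u ((n : ℝ≥0∞) / ((n : ℝ≥0∞) - 1)) ν ≤ ENNReal.ofReal I * TVm m ν u) := by
  have hI0 : ENNReal.ofReal I ≠ 0 := by
    simp only [ne_eq, ENNReal.ofReal_eq_zero, not_le]; exact hI
  have hp0 : ((n : ℝ≥0∞)) / ((n : ℝ≥0∞) - 1) ≠ 0 := by
    rw [ne_eq, ENNReal.div_eq_zero_iff]
    push_neg
    exact ⟨by exact_mod_cast Nat.one_le_iff_ne_zero.mp hn, ENNReal.sub_ne_top (ENNReal.natCast_ne_top n)⟩
  constructor
  · -- isoperimetric ⟹ Sobolev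
    intro hiso u hu
    obtain ⟨⟨hum, _⟩, A, hA, hA0, hAlt, hae⟩ := hu
    have hAfin : ν A ≠ ⊤ := (lt_of_lt_of_le hAlt le_top).ne
    set v₁ : X → ℝ := fun x => max (u x) 0 with hv₁def
    set v₂ : X → ℝ := fun x => max (-u x) 0 with hv₂def
    have hv₁m : Measurable v₁ := hum.max measurable_const
    have hv₂m : Measurable v₂ := hum.neg.max measurable_const
    have hv₁0 : ∀ x, 0 ≤ v₁ x := fun x => le_max_right _ _
    have hv₂0 : ∀ x, 0 ≤ v₂ x := fun x => le_max_right _ _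
    have hsupp₁ : ∀ t : ℝ, 0 < t → ν {x | t < v₁ x} ≤ ν A :=
      fun t ht => meas_level_le hae (fun x hx => by simp [hv₁def, hx]) ht
    have hsupp₂ : ∀ t : ℝ, 0 < t → ν {x | t < v₂ x} ≤ ν A :=
      fun t ht => meas_level_le hae (fun x hx => by simp [hv₂def, hx]) ht
    rcases eq_or_lt_of_le hn with hn1 | hn2
    · -- n = 1
      subst hn1
      rw [p_top_of_one, eLpNorm_exponent_top]
      have hpartE : ∀ v : X → ℝ, Measurable v → (∀ x, 0 ≤ v x) →
          (∀ t : ℝ, 0 < t → ν {x | t < v x} ≤ ν A) →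
          essSup (fun x => ENNReal.ofReal (v x)) ν ≤ ENNReal.ofReal I * TVm m ν v := by
        intro v hvm hv0 hs
        rw [coarea hprob hker hrev hvm hv0]
        by_contra hcon
        push_neg at hcon
        obtain ⟨r, -, hRr, hre⟩ := ENNReal.lt_iff_exists_real_btwn.mp hcon
        have hrpos : 0 < r := by
          by_contra h
          push_neg at h
          rw [ENNReal.ofReal_of_nonpos h] at hRr
          exact absurd hRr (by simp)
        have hPt : ∀ t : ℝ, 0 < t → t < r →
            (ENNReal.ofReal I)⁻¹ ≤ Pm m ν {z | t < v z} := by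
          intro t ht htr
          have hpos : 0 < ν {z | t < v z} := by
            rw [zero_lt_iff]
            intro h0
            have hb : essSup (fun x => ENNReal.ofReal (v x)) ν ≤ ENNReal.ofReal t := by
              refine essSup_le_of_ae_le _ ?_
              have hnull : ∀ᵐ x ∂ν, ¬(t < v x) := by
                rw [ae_iff]
                simpa using h0
              exact hnull.mono fun x hx => ENNReal.ofReal_le_ofReal (not_lt.mp hx)
            have h1 : essSup (fun x => ENNReal.ofReal (v x)) ν < ENNReal.ofReal r :=
              lt_of_le_of_lt hb (ENNReal.ofReal_lt_ofReal_iff hrpos |>.mpr htr)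
            exact absurd hre (not_lt.2 h1.le)
          have hlt : ν {z | t < v z} < ν Set.univ := lt_of_le_of_lt (hs t ht) hAlt
          have hi := hiso _ (measurableSet_lt measurable_const hvm) hpos hlt
          rw [show ((((1:ℕ):ℝ)) - 1) / ((1:ℕ):ℝ) = (0:ℝ) by norm_num,
            ENNReal.rpow_zero] at hi
          calc (ENNReal.ofReal I)⁻¹ = (ENNReal.ofReal I)⁻¹ * 1 := (mul_one _).symm
            _ ≤ (ENNReal.ofReal I)⁻¹ * (ENNReal.ofReal I * Pm m ν {z | t < v z}) :=
                mul_le_mul_right hi _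
            _ = Pm m ν {z | t < v z} := by
                rw [← mul_assoc, ENNReal.inv_mul_cancel hI0 ENNReal.ofReal_ne_top, one_mul]
        have hint : ENNReal.ofReal r
            ≤ ENNReal.ofReal I * ∫⁻ t in Set.Ioi (0:ℝ), Pm m ν {z | t < v z} := by
          have hlow : (ENNReal.ofReal I)⁻¹ * ENNReal.ofReal r
              ≤ ∫⁻ t in Set.Ioi (0:ℝ), Pm m ν {z | t < v z} := by
            have heq : (ENNReal.ofReal I)⁻¹ * ENNReal.ofReal r
                = ∫⁻ t in Set.Ioi (0:ℝ),
                    (Set.Ioo (0:ℝ) r).indicator (fun _ => (ENNReal.ofReal I)⁻¹) t := by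
              rw [lintegral_indicator measurableSet_Ioo,
                Measure.restrict_restrict measurableSet_Ioo, setLIntegral_const,
                Set.inter_eq_left.mpr Set.Ioo_subset_Ioi_self, Real.volume_Ioo, sub_zero]
            rw [heq]
            refine lintegral_mono fun t => ?_
            by_cases hmem : t ∈ Set.Ioo (0:ℝ) r
            · rw [Set.indicator_of_mem hmem]
              exact hPt t hmem.1 hmem.2
            · rw [Set.indicator_of_notMem hmem]
              exact zero_le
          calc ENNReal.ofReal r
              = ENNReal.ofReal I * ((ENNReal.ofReal I)⁻¹ * ENNReal.ofReal r) := by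
                rw [← mul_assoc, ENNReal.mul_inv_cancel hI0 ENNReal.ofReal_ne_top, one_mul]
            _ ≤ ENNReal.ofReal I * ∫⁻ t in Set.Ioi (0:ℝ), Pm m ν {z | t < v z} :=
                mul_le_mul_right hlow _
        exact absurd hRr (not_lt.2 hint)
      have h1 := hpartE v₁ hv₁m hv₁0 hsupp₁
      have h2 := hpartE v₂ hv₂m hv₂0 hsupp₂
      have hub : ∀ᵐ x ∂ν, ‖u x‖ₑ
          ≤ ENNReal.ofReal I * TVm m ν v₁ + ENNReal.ofReal I * TVm m ν v₂ := by
        filter_upwards [ae_le_essSup (fun x => ENNReal.ofReal (v₁ x)) (μ := ν),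
          ae_le_essSup (fun x => ENNReal.ofReal (v₂ x)) (μ := ν)] with x hx1 hx2
        have habs : ‖u x‖ₑ ≤ max (ENNReal.ofReal (v₁ x)) (ENNReal.ofReal (v₂ x)) := by
          rw [Real.enorm_eq_ofReal_abs]
          rcases abs_cases (u x) with ⟨he, h0⟩ | ⟨he, h0⟩
          · exact le_max_of_le_left (ENNReal.ofReal_le_ofReal (by rw [he]; exact le_max_left _ _))
          · exact le_max_of_le_right (ENNReal.ofReal_le_ofReal (by rw [he]; exact le_max_left _ _))
        refine le_trans habs ?_
        exact max_le (hx1.trans (h1.trans le_self_add)) (hx2.trans (h2.trans le_add_self))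
      calc eLpNormEssSup u ν
          ≤ ENNReal.ofReal I * TVm m ν v₁ + ENNReal.ofReal I * TVm m ν v₂ :=
            essSup_le_of_ae_le _ hub
        _ = ENNReal.ofReal I * (TVm m ν v₁ + TVm m ν v₂) := (mul_add _ _ _).symm
        _ ≤ ENNReal.ofReal I * TVm m ν u := mul_le_mul_right (tv_split u) _
    · -- n ≥ 2
      set q : ℝ := (n:ℝ) / ((n:ℝ) - 1) with hqdef
      have hnR : (2:ℝ) ≤ (n:ℝ) := by exact_mod_cast hn2
      have hnpos : (0:ℝ) < (n:ℝ) - 1 := by linarith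
      have hq : 1 < q := by
        rw [hqdef, lt_div_iff₀ hnpos]
        linarith
      have hp_eq : ((n : ℝ≥0∞)) / ((n : ℝ≥0∞) - 1) = ENNReal.ofReal q := p_eq_ofReal hn2
      have hptop : ((n : ℝ≥0∞)) / ((n : ℝ≥0∞) - 1) ≠ ⊤ := by
        rw [hp_eq]; exact ENNReal.ofReal_ne_top
      have hpto : (((n : ℝ≥0∞)) / ((n : ℝ≥0∞) - 1)).toReal = q := by
        rw [hp_eq, ENNReal.toReal_ofReal (by positivity)]
      have hexp : ((n:ℝ) - 1) / (n:ℝ) = 1 / q := by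
        rw [hqdef, one_div_div]
      have hpart : ∀ v : X → ℝ, Measurable v → (∀ x, 0 ≤ v x) →
          (∀ t : ℝ, 0 < t → ν {x | t < v x} ≤ ν A) →
          eLpNorm v ((n : ℝ≥0∞) / ((n : ℝ≥0∞) - 1)) ν ≤ ENNReal.ofReal I * TVm m ν v := by
        intro v hvm hv0 hs
        rw [eLpNorm_eq_lintegral_rpow_enorm_toReal hp0 hptop, hpto]
        calc (∫⁻ x, ‖v x‖ₑ ^ q ∂ν) ^ (1/q)
            = (∫⁻ x, ENNReal.ofReal (v x) ^ q ∂ν) ^ (1/q) := by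
              congr 1
              exact lintegral_congr fun x => by rw [Real.enorm_eq_ofReal (hv0 x)]
          _ ≤ ∫⁻ t in Set.Ioi (0:ℝ), (ν {x | t < v x}) ^ (1/q) :=
              lp_le_layer hvm hv0 hq hAfin hs
          _ ≤ ∫⁻ t in Set.Ioi (0:ℝ), ENNReal.ofReal I * Pm m ν {x | t < v x} := by
              refine setLIntegral_mono' measurableSet_Ioi fun t ht => ?_
              by_cases h0 : ν {x | t < v x} = 0
              · rw [h0, ENNReal.zero_rpow_of_pos (by positivity)]
                exact zero_le
              · have hi := hiso {x | t < v x} (measurableSet_lt measurable_const hvm)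
                  (zero_lt_iff.mpr h0) (lt_of_le_of_lt (hs t ht) hAlt)
                rw [hexp] at hi
                exact hi
          _ = ENNReal.ofReal I * ∫⁻ t in Set.Ioi (0:ℝ), Pm m ν {x | t < v x} :=
              lintegral_const_mul' _ _ ENNReal.ofReal_ne_top
          _ = ENNReal.ofReal I * TVm m ν v := by
              rw [← coarea hprob hker hrev hvm hv0]
      have hsum := add_le_add (hpart v₁ hv₁m hv₁0 hsupp₁) (hpart v₂ hv₂m hv₂0 hsupp₂)
      have huv : u = fun x => v₁ x - v₂ x :=
        funext fun x => (max_zero_sub_max_neg_zero_eq_self (u x)).symm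
      calc eLpNorm u ((n : ℝ≥0∞) / ((n : ℝ≥0∞) - 1)) ν
          = eLpNorm (v₁ - v₂) ((n : ℝ≥0∞) / ((n : ℝ≥0∞) - 1)) ν := by
            rw [show v₁ - v₂ = u from (funext fun x => (max_zero_sub_max_neg_zero_eq_self (u x)))]
        _ ≤ eLpNorm v₁ ((n : ℝ≥0∞) / ((n : ℝ≥0∞) - 1)) ν
            + eLpNorm v₂ ((n : ℝ≥0∞) / ((n : ℝ≥0∞) - 1)) ν := by
            refine eLpNorm_sub_le hv₁m.aestronglyMeasurable hv₂m.aestronglyMeasurable ?_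
            rw [hp_eq]
            exact ENNReal.one_le_ofReal.mpr hq.le
        _ ≤ ENNReal.ofReal I * TVm m ν v₁ + ENNReal.ofReal I * TVm m ν v₂ := hsum
        _ = ENNReal.ofReal I * (TVm m ν v₁ + TVm m ν v₂) := (mul_add _ _ _).symm
        _ ≤ ENNReal.ofReal I * TVm m ν u := mul_le_mul_right (tv_split u) _
  · -- Sobolev ⟹ isoperimetric
    intro hsob A hA hA0 hAlt
    by_cases hP : Pm m ν A = ⊤
    · rw [hP, ENNReal.mul_top hI0]
      exact le_top
    · set u : X → ℝ := A.indicator (fun _ => (1:ℝ)) with hu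
      have hum : Measurable u := measurable_const.indicator hA
      have henergy : nlEnergy m ν u = 2 * Pm m ν A := by
        have hpt : ∀ x y, ENNReal.ofReal |u y - u x|
            = A.indicator (1 : X → ℝ≥0∞) x * Aᶜ.indicator (1 : X → ℝ≥0∞) y
              + Aᶜ.indicator (1 : X → ℝ≥0∞) x * A.indicator (1 : X → ℝ≥0∞) y := by
          intro x y
          by_cases hx : x ∈ A <;> by_cases hy : y ∈ A <;>
            simp [hu, hx, hy, Set.indicator_apply]
        rw [show nlEnergy m ν u
            = ∫⁻ x, ∫⁻ y, (A.indicator (1 : X → ℝ≥0∞) x * Aᶜ.indicator (1 : X → ℝ≥0∞) y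
              + Aᶜ.indicator (1 : X → ℝ≥0∞) x * A.indicator (1 : X → ℝ≥0∞) y) ∂(m x) ∂ν from
          lintegral_congr fun x => lintegral_congr fun y => hpt x y]
        exact double_ind_eq hker hrev hA
      have hTV : TVm m ν u = Pm m ν A := by
        rw [TVm, henergy, ← mul_assoc,
          ENNReal.inv_mul_cancel (by norm_num) (by norm_num), one_mul]
      have hmem : MemBVm0 m ν u := by
        refine ⟨⟨hum, ?_⟩, A, hA, hA0, hAlt, ae_of_all _ fun x hx => Set.indicator_of_notMem hx _⟩
        rw [henergy]
        exact ENNReal.mul_lt_top (by norm_num) (lt_top_iff_ne_top.mpr hP)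
      have h := hsob u hmem
      rw [eLpNorm_indicator_const' hA hA0.ne' hp0, hTV, exp_toReal hn] at h
      simpa using h
end

section
/- Let [X,d,m] be a metric random walk space with an invariant and reversible σ-finite measure ν, and let Ψ : (0,∞) → [0,∞) be non-increasing. Then ν(A)·Ψ(ν(A)) ≤ P_m(A) for every ν-measurable A ⊂ X with 0 < ν(A) < ν(X) if and only if Ψ(ν(A))·‖u‖_{L¹(X,ν)} ≤ TV_m(u) for every ν-measurable A ⊂ X with 0 < ν(A) < ν(X) and every u ∈ L¹(X,ν) with u = 0 ν-a.e. on X∖A. -/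
open MeasureTheory ENNReal Filter Set Topology

section Aux

variable {X : Type*} [MeasurableSpace X] {m : X → Measure X} {ν : Measure X}

lemma lm_symm (hrev : Reversible m ν) {A B : Set X}
    (hA : MeasurableSet A) (hB : MeasurableSet B) :
    Lm m ν A B = Lm m ν B A := by
  have h := hrev (fun x y => A.indicator (1 : X → ℝ≥0∞) x *
      B.indicator (1 : X → ℝ≥0∞) y)
    (((measurable_one.indicator hA).comp measurable_fst).mul
      ((measurable_one.indicator hB).comp measurable_snd))
  have e1 : ∀ x, ∫⁻ y, A.indicator (1 : X → ℝ≥0∞) x *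
        B.indicator (1 : X → ℝ≥0∞) y ∂(m x)
        = A.indicator (fun z => m z B) x := by
    intro x
    rw [lintegral_const_mul _ (measurable_one.indicator hB), lintegral_indicator_one hB]
    by_cases hx : x ∈ A <;> simp [hx]
  have e2 : ∀ y, ∫⁻ x, A.indicator (1 : X → ℝ≥0∞) x *
        B.indicator (1 : X → ℝ≥0∞) y ∂(m y)
        = B.indicator (fun z => m z A) y := by
    intro y
    rw [lintegral_mul_const _ (measurable_one.indicator hA), lintegral_indicator_one hA]
    by_cases hy : y ∈ B <;> simp [hy]
  simp only [e1, e2] at h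
  rw [lintegral_indicator hA, lintegral_indicator hB] at h
  exact h

lemma ae_kernel_null (hprob : ∀ x, IsProbabilityMeasure (m x))
    (hker : MeasurableKernel m) (hrev : Reversible m ν) {N : Set X}
    (hN : MeasurableSet N) (hN0 : ν N = 0) : ∀ᵐ x ∂ν, m x N = 0 := by
  have h := hrev (fun _ y => N.indicator (1 : X → ℝ≥0∞) y)
    ((measurable_one.indicator hN).comp measurable_snd)
  have e1 : ∀ x, ∫⁻ y, N.indicator (1 : X → ℝ≥0∞) y ∂(m x) = m x N := fun x =>
    lintegral_indicator_one hN
  have e2 : ∀ y, ∫⁻ _x, N.indicator (1 : X → ℝ≥0∞) y ∂(m y)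
      = N.indicator (1 : X → ℝ≥0∞) y := by
    intro y
    have := hprob y
    rw [lintegral_const, measure_univ, mul_one]
  simp only [e1, e2] at h
  rw [lintegral_indicator_one hN, hN0] at h
  exact (lintegral_eq_zero_iff (hker N hN)).mp h

lemma nlEnergy_congr_ae (hprob : ∀ x, IsProbabilityMeasure (m x))
    (hker : MeasurableKernel m) (hrev : Reversible m ν) {f g : X → ℝ}
    (hf : Measurable f) (hg : Measurable g) (hfg : f =ᵐ[ν] g) :
    nlEnergy m ν f = nlEnergy m ν g := by
  set N : Set X := {x | f x ≠ g x} with hNdef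
  have hN : MeasurableSet N := (measurableSet_eq_fun hf hg).compl
  have hN0 : ν N = 0 := hfg
  have hae := ae_kernel_null hprob hker hrev hN hN0
  refine lintegral_congr_ae ?_
  filter_upwards [hae, hfg] with x hx hfx
  refine lintegral_congr_ae ?_
  have hy : ∀ᵐ y ∂(m x), f y = g y := by
    have : ∀ᵐ y ∂(m x), y ∉ N := (measure_eq_zero_iff_ae_notMem).mp hx
    filter_upwards [this] with y hy
    simpa [hNdef] using hy
  filter_upwards [hy] with y hyy
  rw [hyy, hfx]

lemma nlEnergy_indicator (hrev : Reversible m ν) (hker : MeasurableKernel m)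
    {A : Set X} (hA : MeasurableSet A) :
    nlEnergy m ν (A.indicator fun _ => (1 : ℝ)) = 2 * Pm m ν A := by
  have key : ∀ x, ∫⁻ y, ENNReal.ofReal |A.indicator (fun _ => (1:ℝ)) y -
      A.indicator (fun _ => (1:ℝ)) x| ∂(m x)
      = A.indicator (fun z => m z Aᶜ) x + Aᶜ.indicator (fun z => m z A) x := by
    intro x
    by_cases hx : x ∈ A
    · have : (fun y => ENNReal.ofReal |A.indicator (fun _ => (1:ℝ)) y -
          A.indicator (fun _ => (1:ℝ)) x|) = Aᶜ.indicator (1 : X → ℝ≥0∞) := by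
        funext y
        by_cases hy : y ∈ A <;> simp [hx, hy]
      rw [this, lintegral_indicator_one hA.compl]
      simp [hx]
    · have : (fun y => ENNReal.ofReal |A.indicator (fun _ => (1:ℝ)) y -
          A.indicator (fun _ => (1:ℝ)) x|) = A.indicator (1 : X → ℝ≥0∞) := by
        funext y
        by_cases hy : y ∈ A <;> simp [hx, hy]
      rw [this, lintegral_indicator_one hA]
      simp [hx]
  rw [nlEnergy]
  simp only [key]
  rw [lintegral_add_left ((hker Aᶜ hA.compl).indicator hA),
    lintegral_indicator hA, lintegral_indicator hA.compl]
  have : Lm m ν Aᶜ A = Lm m ν A Aᶜ := lm_symm hrev hA.compl hA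
  rw [Pm, ← Lm, ← Lm, this, two_mul]

end Aux

section Coarea

variable {X : Type*} [MeasurableSpace X] {m : X → Measure X} {ν : Measure X}

lemma nlEnergy_coarea [SigmaFinite ν] (hprob : ∀ x, IsProbabilityMeasure (m x))
    (hker : MeasurableKernel m) {v : X → ℝ} (hv : Measurable v) (hv0 : ∀ x, 0 ≤ v x) :
    nlEnergy m ν v = ∫⁻ t in Ioi (0 : ℝ),
      (Lm m ν {x | t < v x} {x | t < v x}ᶜ + Lm m ν {x | t < v x}ᶜ {x | t < v x}) := by
  classical
  set κ : ProbabilityTheory.Kernel X X :=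
    ⟨m, Measure.measurable_of_measurable_coe _ (fun s hs => hker s hs)⟩ with hκ
  haveI : ProbabilityTheory.IsMarkovKernel κ := ⟨fun x => hprob x⟩
  set PP : Measure (X × X) := ν.compProd κ with hPPdef
  set M : Set ((X × X) × ℝ) :=
    {z | (z.2 < v z.1.1 ∧ ¬ z.2 < v z.1.2) ∨ (z.2 < v z.1.2 ∧ ¬ z.2 < v z.1.1)} with hM
  have hMmeas : MeasurableSet M := by
    apply MeasurableSet.union
    · exact (measurableSet_lt measurable_snd (hv.comp (measurable_fst.comp measurable_fst))).inter
        (measurableSet_lt measurable_snd (hv.comp (measurable_snd.comp measurable_fst))).compl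
    · exact (measurableSet_lt measurable_snd (hv.comp (measurable_snd.comp measurable_fst))).inter
        (measurableSet_lt measurable_snd (hv.comp (measurable_fst.comp measurable_fst))).compl
  -- step 1: express nlEnergy as integral over PP
  have step1 : nlEnergy m ν v = ∫⁻ p, ENNReal.ofReal |v p.2 - v p.1| ∂PP := by
    have hf : Measurable fun p : X × X => ENNReal.ofReal |v p.2 - v p.1| :=
      ((hv.comp measurable_snd).sub (hv.comp measurable_fst)).abs.ennreal_ofReal
    rw [hPPdef, Measure.lintegral_compProd hf]
    rfl
  -- step 2: pointwise layer-cake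
  have step2 : ∀ p : X × X,
      ∫⁻ t in Ioi (0 : ℝ), M.indicator (fun _ => (1 : ℝ≥0∞)) (p, t)
        = ENNReal.ofReal |v p.2 - v p.1| := by
    intro p
    set a := v p.1
    set b := v p.2
    have hTa : (fun t : ℝ => M.indicator (fun _ => (1 : ℝ≥0∞)) (p, t))
        = (Ico (min a b) (max a b)).indicator (fun _ => (1 : ℝ≥0∞)) := by
      funext t
      have hiff : (p, t) ∈ M ↔ t ∈ Ico (min a b) (max a b) := by
        simp only [hM, mem_setOf_eq, not_lt, mem_Ico, min_le_iff, lt_max_iff]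
        constructor
        · rintro (⟨h1, h2⟩ | ⟨h1, h2⟩)
          · exact ⟨Or.inr h2, Or.inl h1⟩
          · exact ⟨Or.inl h2, Or.inr h1⟩
        · rintro ⟨h1 | h1, h2 | h2⟩
          · exact absurd h2 (not_lt.2 h1)
          · exact Or.inr ⟨h2, h1⟩
          · exact Or.inl ⟨h2, h1⟩
          · exact absurd h2 (not_lt.2 h1)
      by_cases hmem : (p, t) ∈ M
      · rw [Set.indicator_of_mem hmem, Set.indicator_of_mem (hiff.mp hmem)]
      · rw [Set.indicator_of_notMem hmem,
          Set.indicator_of_notMem (fun hc => hmem (hiff.mpr hc))]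
    rw [hTa, lintegral_indicator_const measurableSet_Ico, one_mul,
      Measure.restrict_apply measurableSet_Ico]
    have h0 : 0 ≤ min a b := le_min (hv0 _) (hv0 _)
    have hle : volume (Ico (min a b) (max a b) ∩ Ioi 0)
        ≤ ENNReal.ofReal (max a b - min a b) := by
      refine le_trans (measure_mono Set.inter_subset_left) ?_
      rw [Real.volume_Ico]
    have hge : ENNReal.ofReal (max a b - min a b)
        ≤ volume (Ico (min a b) (max a b) ∩ Ioi 0) := by
      rw [← Real.volume_Ioo (a := min a b) (b := max a b)]
      refine measure_mono ?_
      intro t ht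
      exact ⟨⟨le_of_lt ht.1, ht.2⟩, lt_of_le_of_lt h0 ht.1⟩
    have heqv := le_antisymm hle hge
    rw [heqv, max_sub_min_eq_abs, abs_sub_comm]
  -- step 3: swap
  have hsec : ∀ t : ℝ, {p : X × X | (p, t) ∈ M}
      = ({x | t < v x} ×ˢ {x | t < v x}ᶜ) ∪ ({x | t < v x}ᶜ ×ˢ {x | t < v x}) := by
    intro t
    ext p
    simp only [hM, mem_setOf_eq, mem_union, mem_prod, mem_compl_iff, not_lt]
    constructor
    · rintro (⟨h1, h2⟩ | ⟨h1, h2⟩)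
      · exact Or.inl ⟨h1, by simpa using h2⟩
      · exact Or.inr ⟨by simpa using h2, h1⟩
    · rintro (⟨h1, h2⟩ | ⟨h1, h2⟩)
      · exact Or.inl ⟨h1, by simpa using h2⟩
      · exact Or.inr ⟨h2, by simpa using h1⟩
  have step4 : ∀ t : ℝ, ∫⁻ p, M.indicator (fun _ => (1 : ℝ≥0∞)) (p, t) ∂PP
      = Lm m ν {x | t < v x} {x | t < v x}ᶜ + Lm m ν {x | t < v x}ᶜ {x | t < v x} := by
    intro t
    have hE : MeasurableSet {x | t < v x} := measurableSet_lt measurable_const hv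
    have heq : (fun p : X × X => M.indicator (fun _ => (1 : ℝ≥0∞)) (p, t))
        = Set.indicator (({x | t < v x} ×ˢ {x | t < v x}ᶜ) ∪
            ({x | t < v x}ᶜ ×ˢ {x | t < v x})) (fun _ => (1 : ℝ≥0∞)) := by
      funext p
      rw [← hsec t]
      by_cases hp : (p, t) ∈ M
      · rw [Set.indicator_of_mem hp,
          Set.indicator_of_mem (show p ∈ {q : X × X | (q, t) ∈ M} from hp)]
      · rw [Set.indicator_of_notMem hp,
          Set.indicator_of_notMem (show p ∉ {q : X × X | (q, t) ∈ M} from hp)]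
    rw [heq, lintegral_indicator_const ((hE.prod hE.compl).union (hE.compl.prod hE)), one_mul]
    have hdisj : Disjoint ({x | t < v x} ×ˢ {x | t < v x}ᶜ)
        ({x | t < v x}ᶜ ×ˢ {x | t < v x}) := by
      rw [Set.disjoint_left]
      rintro p ⟨h1, _⟩ ⟨h3, _⟩
      exact h3 h1
    rw [measure_union hdisj (hE.compl.prod hE),
      Measure.compProd_apply_prod hE hE.compl,
      Measure.compProd_apply_prod hE.compl hE]
    rfl
  rw [step1]
  have hswap0 : ∫⁻ p, ENNReal.ofReal |v p.2 - v p.1| ∂PP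
      = ∫⁻ p, (∫⁻ t in Ioi (0:ℝ), M.indicator (fun _ => (1 : ℝ≥0∞)) (p, t)) ∂PP :=
    lintegral_congr fun p => (step2 p).symm
  have hunc : AEMeasurable (Function.uncurry fun (p : X × X) (t : ℝ) =>
      M.indicator (fun _ => (1 : ℝ≥0∞)) (p, t)) (PP.prod (volume.restrict (Ioi 0))) := by
    refine Measurable.aemeasurable ?_
    have : Measurable fun z : (X × X) × ℝ => M.indicator (fun _ => (1 : ℝ≥0∞)) (z.1, z.2) :=
      (measurable_one.indicator hMmeas).comp (measurable_fst.prodMk measurable_snd)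
    exact this
  rw [hswap0, lintegral_lintegral_swap hunc]
  exact lintegral_congr fun t => step4 t
end Coarea


/-- For a non-increasing `Ψ : (0,∞) → [0,∞)`, `[X,d,m,ν]` satisfies the `Ψ`-isoperimetric
inequality `ν(A)·Ψ(ν(A)) ≤ P_m(A)` for all `A` with `0 < ν(A) < ν(X)` if and only if
`Ψ(ν(A))·‖u‖_{L¹(X,ν)} ≤ TV_m(u)` for all such `A` and all `u ∈ L¹(X,ν)` vanishing
`ν`-a.e. outside `A`. -/
theorem psi_isoperimetric_iff_poincare
    {X : Type*} [MetricSpace X] [PolishSpace X] [MeasurableSpace X] [BorelSpace X]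
    (m : X → Measure X) (hprob : ∀ x, IsProbabilityMeasure (m x))
    (hker : MeasurableKernel m)
    (ν : Measure X) [SigmaFinite ν] (hrev : Reversible m ν)
    (Ψ : ℝ → ℝ) (hΨ0 : ∀ r, 0 < r → 0 ≤ Ψ r) (hΨmono : AntitoneOn Ψ (Set.Ioi 0)) :
    (∀ A : Set X, MeasurableSet A → 0 < ν A → ν A < ν Set.univ →
        ν A * ENNReal.ofReal (Ψ (ν A).toReal) ≤ Pm m ν A) ↔
      (∀ A : Set X, MeasurableSet A → 0 < ν A → ν A < ν Set.univ →
        ∀ u : X → ℝ, Measurable u → Integrable u ν → (∀ᵐ x ∂ν, x ∉ A → u x = 0) →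
          ENNReal.ofReal (Ψ (ν A).toReal) * eLpNorm u 1 ν ≤ TVm m ν u) := by
  constructor
  · -- isoperimetric → Poincaré
    intro hiso A hA hA0 hA1 u hu hui hu0
    set c : ℝ≥0∞ := ENNReal.ofReal (Ψ (ν A).toReal) with hc
    set v : X → ℝ := A.indicator (fun x => |u x|) with hvdef
    have hv : Measurable v := (hu.abs).indicator hA
    have hv0 : ∀ x, 0 ≤ v x := fun x =>
      Set.indicator_nonneg (fun y _ => abs_nonneg _) x
    have hveq : (fun x => |u x|) =ᵐ[ν] v := by
      filter_upwards [hu0] with x hx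
      by_cases hxA : x ∈ A
      · simp [hvdef, hxA]
      · simp [hvdef, hxA, hx hxA]
    set E : ℝ → Set X := fun t => {x | t < v x} with hEdef
    have hE : ∀ t, MeasurableSet (E t) := fun t => measurableSet_lt measurable_const hv
    have hEsub : ∀ t : ℝ, 0 < t → E t ⊆ A := by
      intro t ht x hx
      by_contra hxA
      have : v x = 0 := by simp [hvdef, hxA]
      rw [hEdef] at hx
      simp only [mem_setOf_eq, this] at hx
      exact absurd (ht.trans hx) (lt_irrefl 0)
    have hAne : ν A ≠ ⊤ := (hA1.trans_le le_top).ne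
    -- key pointwise inequality
    have key : ∀ t ∈ Ioi (0:ℝ), c * ν (E t) ≤ Pm m ν (E t) := by
      intro t ht
      by_cases h0 : ν (E t) = 0
      · simp [h0]
      have hsub := hEsub t ht
      have hEle : ν (E t) ≤ ν A := measure_mono hsub
      have hEne : ν (E t) ≠ ⊤ := (lt_of_le_of_lt hEle hA1).trans_le le_top |>.ne
      have hcle : c ≤ ENNReal.ofReal (Ψ (ν (E t)).toReal) := by
        refine ENNReal.ofReal_le_ofReal ?_
        refine hΨmono ?_ ?_ ?_
        · exact ENNReal.toReal_pos h0 hEne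
        · exact ENNReal.toReal_pos hA0.ne' hAne
        · exact ENNReal.toReal_mono hAne hEle
      calc c * ν (E t) ≤ ENNReal.ofReal (Ψ (ν (E t)).toReal) * ν (E t) :=
            mul_le_mul_left hcle _
        _ = ν (E t) * ENNReal.ofReal (Ψ (ν (E t)).toReal) := mul_comm _ _
        _ ≤ Pm m ν (E t) := hiso (E t) (hE t) (pos_iff_ne_zero.mpr h0)
            (lt_of_le_of_lt hEle hA1)
    -- layer-cake for the L¹ norm
    have h3 : eLpNorm u 1 ν = ∫⁻ t in Ioi (0:ℝ), ν (E t) := by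
      rw [eLpNorm_one_eq_lintegral_enorm]
      have e1 : ∫⁻ x, ‖u x‖ₑ ∂ν = ∫⁻ x, ENNReal.ofReal (v x) ∂ν := by
        refine lintegral_congr_ae ?_
        filter_upwards [hveq] with x hx
        rw [← hx, ← Real.norm_eq_abs, ofReal_norm]
      rw [e1, lintegral_eq_lintegral_meas_lt ν (Eventually.of_forall hv0) hv.aemeasurable]
    -- coarea for TVm v
    have h1 : TVm m ν v = ∫⁻ t in Ioi (0:ℝ), Pm m ν (E t) := by
      rw [TVm, nlEnergy_coarea hprob hker hv hv0]
      have e2 : ∀ t : ℝ, Lm m ν (E t) (E t)ᶜ + Lm m ν (E t)ᶜ (E t) = 2 * Pm m ν (E t) := by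
        intro t
        rw [lm_symm hrev (hE t).compl (hE t), Pm, two_mul]
      calc 2⁻¹ * ∫⁻ t in Ioi (0:ℝ),
            (Lm m ν {x | t < v x} {x | t < v x}ᶜ + Lm m ν {x | t < v x}ᶜ {x | t < v x})
          = 2⁻¹ * ∫⁻ t in Ioi (0:ℝ), 2 * Pm m ν (E t) := by
            rw [lintegral_congr fun t => e2 t]
        _ = 2⁻¹ * (2 * ∫⁻ t in Ioi (0:ℝ), Pm m ν (E t)) := by
            rw [lintegral_const_mul' 2 _ (by norm_num)]
        _ = ∫⁻ t in Ioi (0:ℝ), Pm m ν (E t) := by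
            rw [← mul_assoc, ENNReal.inv_mul_cancel (by norm_num) (by norm_num), one_mul]
    -- TVm v ≤ TVm u
    have h4 : TVm m ν v ≤ TVm m ν u := by
      refine mul_le_mul_right ?_ _
      have e3 : nlEnergy m ν v = nlEnergy m ν (fun x => |u x|) :=
        nlEnergy_congr_ae hprob hker hrev hv hu.abs hveq.symm
      rw [e3]
      refine lintegral_mono fun x => lintegral_mono fun y => ?_
      exact ENNReal.ofReal_le_ofReal (abs_abs_sub_abs_le_abs_sub _ _)
    calc c * eLpNorm u 1 ν = ∫⁻ t in Ioi (0:ℝ), c * ν (E t) := by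
          rw [h3, lintegral_const_mul' c _ ENNReal.ofReal_ne_top]
      _ ≤ ∫⁻ t in Ioi (0:ℝ), Pm m ν (E t) := by
          refine lintegral_mono_ae ?_
          rw [ae_restrict_iff' measurableSet_Ioi]
          exact Eventually.of_forall key
      _ = TVm m ν v := h1.symm
      _ ≤ TVm m ν u := h4
  · -- Poincaré → isoperimetric
    intro hpoin A hA hA0 hA1
    have hAne : ν A < ⊤ := hA1.trans_le le_top
    have hint : Integrable (A.indicator fun _ => (1:ℝ)) ν := by
      rw [integrable_indicator_iff hA]
      exact (integrableOn_const_iff).mpr (Or.inr hAne)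
    have h := hpoin A hA hA0 hA1 (A.indicator fun _ => (1:ℝ))
      (measurable_const.indicator hA) hint
      (Eventually.of_forall fun x hx => Set.indicator_of_notMem hx _)
    have hnorm : eLpNorm (A.indicator fun _ => (1:ℝ)) 1 ν = ν A := by
      rw [eLpNorm_indicator_const hA one_ne_zero ENNReal.one_ne_top]
      simp
    have hTV : TVm m ν (A.indicator fun _ => (1:ℝ)) = Pm m ν A := by
      rw [TVm, nlEnergy_indicator hrev hker hA, ← mul_assoc,
        ENNReal.inv_mul_cancel (by norm_num) (by norm_num), one_mul]
    rw [hnorm, hTV] at h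
    rw [mul_comm]
    exact h
end

section
/- Let [X,d,m] be a metric random walk space with an invariant and reversible σ-finite measure ν, and let n > 2. Suppose that for some I_n > 0 the Sobolev inequality ‖u‖_{L^{n/(n−1)}(X,ν)} ≤ I_n · TV_m(u) holds for all u ∈ BV_m^0(X,ν). Then, with C_n := (8(n−1)²/(n−2)²) I_n², the inequality ‖u‖²_{L^{2n/(n−2)}(X,ν)} ≤ C_n · H_m(u) holds for all u ∈ BV_m^0(X,ν), where H_m(u) := (1/2) ∫_X ∫_X (u(x) − u(y))² dm_x(y) dν(x) (both sides allowed to take the value +∞). -/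
open MeasureTheory ENNReal Filter Set Topology

section AuxLemmas

/-- Mean value inequality for `t ↦ t ^ c` on `[0, max a b]`. -/
lemma aux_rpow_sub_abs_le {c : ℝ} (hc : 1 ≤ c) {a b : ℝ} (ha : 0 ≤ a) (hb : 0 ≤ b) :
    |a ^ c - b ^ c| ≤ c * max a b ^ (c - 1) * |a - b| := by
  have hc0 : (0:ℝ) ≤ c := le_trans zero_le_one hc
  have hmema : a ∈ Set.Icc (0:ℝ) (max a b) := ⟨ha, le_max_left a b⟩
  have hmemb : b ∈ Set.Icc (0:ℝ) (max a b) := ⟨hb, le_max_right a b⟩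
  have key := (convex_Icc (0:ℝ) (max a b)).norm_image_sub_le_of_norm_hasDerivWithin_le
    (f := fun t : ℝ => t ^ c) (f' := fun t : ℝ => c * t ^ (c - 1))
    (C := c * max a b ^ (c - 1))
    (fun t _ => (Real.hasDerivAt_rpow_const (Or.inr hc)).hasDerivWithinAt)
    (fun t ht => by
      rw [Real.norm_eq_abs,
        abs_of_nonneg (mul_nonneg hc0 (Real.rpow_nonneg ht.1 _))]
      exact mul_le_mul_of_nonneg_left
        (Real.rpow_le_rpow ht.1 ht.2 (by linarith)) hc0)
    hmemb hmema
  simpa [Real.norm_eq_abs] using key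

lemma aux_max_rpow_le {a b e : ℝ} (ha : 0 ≤ a) (hb : 0 ≤ b) :
    max a b ^ e ≤ a ^ e + b ^ e := by
  rcases le_total a b with h | h
  · rw [max_eq_right h]
    exact le_add_of_nonneg_left (Real.rpow_nonneg ha e)
  · rw [max_eq_left h]
    exact le_add_of_nonneg_right (Real.rpow_nonneg hb e)

lemma aux_two_half_mul (B H : ℝ≥0∞) :
    2⁻¹ * ((2 * B) ^ ((1:ℝ)/2) * ((2 * H) ^ ((1:ℝ)/2))) =
      B ^ ((1:ℝ)/2) * H ^ ((1:ℝ)/2) := by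
  rw [ENNReal.mul_rpow_of_nonneg _ _ (by norm_num : (0:ℝ) ≤ 1/2),
    ENNReal.mul_rpow_of_nonneg _ _ (by norm_num : (0:ℝ) ≤ 1/2)]
  have h2 : (2:ℝ≥0∞) ^ ((1:ℝ)/2) * 2 ^ ((1:ℝ)/2) = 2 := by
    rw [← ENNReal.rpow_add _ _ two_ne_zero ENNReal.ofNat_ne_top]
    norm_num
  calc 2⁻¹ * (2 ^ ((1:ℝ)/2) * B ^ ((1:ℝ)/2) * (2 ^ ((1:ℝ)/2) * H ^ ((1:ℝ)/2)))
      = 2⁻¹ * ((2 ^ ((1:ℝ)/2) * 2 ^ ((1:ℝ)/2)) * (B ^ ((1:ℝ)/2) * H ^ ((1:ℝ)/2))) := by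
        ring
    _ = 2⁻¹ * (2 * (B ^ ((1:ℝ)/2) * H ^ ((1:ℝ)/2))) := by rw [h2]
    _ = B ^ ((1:ℝ)/2) * H ^ ((1:ℝ)/2) := by
        rw [← mul_assoc, ENNReal.inv_mul_cancel two_ne_zero ENNReal.ofNat_ne_top, one_mul]

end AuxLemmas

/-- If the Sobolev inequality `‖u‖_{L^{n/(n−1)}} ≤ I·TV_m(u)` holds on `BV_m^0(X,ν)` for
some `n > 2`, then with `C := 8(n−1)²/(n−2)² · I²` one has
`‖u‖²_{L^{2n/(n−2)}} ≤ C · H_m(u)` for all `u ∈ BV_m^0(X,ν)`. -/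
theorem sobolev_implies_dirichlet_sobolev
    {X : Type*} [MetricSpace X] [PolishSpace X] [MeasurableSpace X] [BorelSpace X]
    (m : X → Measure X) (hprob : ∀ x, IsProbabilityMeasure (m x))
    (hker : MeasurableKernel m)
    (ν : Measure X) [SigmaFinite ν] (hrev : Reversible m ν)
    (n : ℝ) (hn : 2 < n) (I : ℝ) (hI : 0 < I)
    (hsob : ∀ u : X → ℝ, MemBVm0 m ν u →
      eLpNorm u (ENNReal.ofReal (n / (n - 1))) ν ≤ ENNReal.ofReal I * TVm m ν u) :
    ∀ u : X → ℝ, MemBVm0 m ν u →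
      (eLpNorm u (ENNReal.ofReal (2 * n / (n - 2))) ν) ^ 2 ≤
        ENNReal.ofReal (8 * (n - 1) ^ 2 / (n - 2) ^ 2 * I ^ 2) * Hm m ν u := by
  intro u hu0
  obtain ⟨⟨hu, hEu⟩, A, hAm, hA0, hAlt, hA⟩ := hu0
  have hAfin : ν A < ⊤ := lt_of_lt_of_le hAlt le_top
  have hn2 : (0:ℝ) < n - 2 := by linarith
  have hn1 : (0:ℝ) < n - 1 := by linarith
  set p : ℝ := 2 * n / (n - 2) with hp_def
  set q : ℝ := n / (n - 1) with hq_def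
  set c : ℝ := 2 * (n - 1) / (n - 2) with hc_def
  have hp_pos : 0 < p := div_pos (by linarith) hn2
  have hq_pos : 0 < q := div_pos (by linarith) hn1
  have hc1 : 1 ≤ c := by
    rw [hc_def, le_div_iff₀ hn2]; linarith
  have hc0 : (0:ℝ) ≤ c := le_trans zero_le_one hc1
  have hc10 : (0:ℝ) ≤ c - 1 := by linarith
  have hcq : c * q = p := by
    rw [hc_def, hq_def, hp_def]; field_simp
  have h2c : (c - 1) * 2 = p := by
    rw [hc_def, hp_def]; field_simp; ring
  have hcsum : c = p / 2 + 1 := by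
    rw [hc_def, hp_def]; field_simp; ring
  -- kernel setup
  have hm : Measurable m := Measure.measurable_of_measurable_coe m hker
  set κ : ProbabilityTheory.Kernel X X := ⟨m, hm⟩ with hκ_def
  haveI : ProbabilityTheory.IsMarkovKernel κ := ⟨hprob⟩
  have hcomp : ∀ {g : X × X → ℝ≥0∞}, Measurable g →
      ∫⁻ x, ∫⁻ y, g (x, y) ∂(m x) ∂ν = ∫⁻ z, g z ∂(ν.compProd κ) := by
    intro g hg
    exact (MeasureTheory.Measure.lintegral_compProd (μ := ν) (κ := κ) hg).symm
  have hrev' : ∀ {ψ : X → ℝ≥0∞}, Measurable ψ →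
      ∫⁻ x, ∫⁻ y, ψ y ∂(m x) ∂ν = ∫⁻ y, ψ y ∂ν := by
    intro ψ hψ
    have h := hrev (fun _ y => ψ y) (hψ.comp measurable_snd)
    rw [h]
    refine lintegral_congr fun y => ?_
    rw [lintegral_const, (hprob y).measure_univ, mul_one]
  -- truncations
  set v : ℕ → X → ℝ := fun k x => min |u x| (k : ℝ) with hv_def
  have hv_meas : ∀ k, Measurable (v k) := fun k => hu.abs.min measurable_const
  have hv_nonneg : ∀ k x, 0 ≤ v k x := fun k x =>
    le_min (abs_nonneg _) (Nat.cast_nonneg k)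
  have hv_le : ∀ k x, v k x ≤ (k : ℝ) := fun k x => min_le_right _ _
  have hv_le_abs : ∀ k x, v k x ≤ |u x| := fun k x => min_le_left _ _
  have hv_lip : ∀ k x y, |v k x - v k y| ≤ |u x - u y| := by
    intro k x y
    have h1 := abs_min_sub_min_le_max |u x| (k:ℝ) |u y| (k:ℝ)
    rw [sub_self, abs_zero] at h1
    exact h1.trans (max_le (abs_abs_sub_abs_le_abs_sub _ _) (abs_nonneg _))
  set J : ℕ → ℝ≥0∞ := fun k => ∫⁻ x, ENNReal.ofReal (v k x ^ p) ∂ν with hJ_def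
  have hJ_fin : ∀ k, J k ≠ ⊤ := by
    intro k
    have hle : ∀ᵐ x ∂ν, ENNReal.ofReal (v k x ^ p) ≤
        A.indicator (fun _ => ENNReal.ofReal ((k:ℝ) ^ p)) x := by
      filter_upwards [hA] with x hx
      by_cases hxA : x ∈ A
      · rw [Set.indicator_of_mem hxA]
        exact ENNReal.ofReal_le_ofReal
          (Real.rpow_le_rpow (hv_nonneg k x) (hv_le k x) hp_pos.le)
      · have hvx : v k x = 0 := by
          simp only [hv_def]; simp [hx hxA]
        simp [hvx, Real.zero_rpow hp_pos.ne']
    have hJle : J k ≤ ENNReal.ofReal ((k:ℝ) ^ p) * ν A := by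
      calc J k ≤ ∫⁻ x, A.indicator (fun _ => ENNReal.ofReal ((k:ℝ)^p)) x ∂ν :=
            lintegral_mono_ae hle
        _ = ENNReal.ofReal ((k:ℝ)^p) * ν A := by
            rw [lintegral_indicator hAm, setLIntegral_const]
    exact (hJle.trans_lt (ENNReal.mul_lt_top ENNReal.ofReal_lt_top hAfin)).ne
  -- key estimate for each truncation
  have hNle : ∀ k, (J k) ^ ((1:ℝ)/p) ≤
      ENNReal.ofReal (I * c) * (Hm m ν u) ^ ((1:ℝ)/2) := by
    intro k
    by_cases hJ0 : J k = 0
    · rw [hJ0, ENNReal.zero_rpow_of_pos (by positivity)]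
      exact zero_le
    set w : X → ℝ := fun x => v k x ^ c with hw_def
    have hw_meas : Measurable w :=
      (Real.continuous_rpow_const hc0).measurable.comp (hv_meas k)
    have hw_nonneg : ∀ x, 0 ≤ w x := fun x => Real.rpow_nonneg (hv_nonneg k x) c
    have hw_ptwise : ∀ x y, |w y - w x| ≤
        c * max (v k x) (v k y) ^ (c - 1) * |u y - u x| := by
      intro x y
      have h1 := aux_rpow_sub_abs_le hc1 (hv_nonneg k y) (hv_nonneg k x)
      have h2 : |v k y - v k x| ≤ |u y - u x| := hv_lip k y x
      calc |w y - w x| ≤ c * max (v k y) (v k x) ^ (c - 1) * |v k y - v k x| := h1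
        _ ≤ c * max (v k y) (v k x) ^ (c - 1) * |u y - u x| :=
            mul_le_mul_of_nonneg_left h2 (by positivity)
        _ = c * max (v k x) (v k y) ^ (c - 1) * |u y - u x| := by rw [max_comm]
    -- w is in BV_m^0
    have hwBV : MemBVm0 m ν w := by
      refine ⟨⟨hw_meas, ?_⟩, A, hAm, hA0, hAlt, ?_⟩
      · have hbd : nlEnergy m ν w ≤
            ENNReal.ofReal (c * (k:ℝ) ^ (c-1)) * nlEnergy m ν u := by
          simp only [nlEnergy]
          calc ∫⁻ x, ∫⁻ y, ENNReal.ofReal |w y - w x| ∂(m x) ∂ν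
              ≤ ∫⁻ x, ∫⁻ y, ENNReal.ofReal (c * (k:ℝ) ^ (c-1)) *
                  ENNReal.ofReal |u y - u x| ∂(m x) ∂ν := by
                refine lintegral_mono fun x => lintegral_mono fun y => ?_
                rw [← ENNReal.ofReal_mul (by positivity)]
                refine ENNReal.ofReal_le_ofReal ((hw_ptwise x y).trans ?_)
                refine mul_le_mul_of_nonneg_right ?_ (abs_nonneg _)
                refine mul_le_mul_of_nonneg_left ?_ hc0
                exact Real.rpow_le_rpow (le_trans (hv_nonneg k x) (le_max_left _ _))
                  (max_le (hv_le k x) (hv_le k y)) hc10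
            _ = ENNReal.ofReal (c * (k:ℝ) ^ (c-1)) *
                  ∫⁻ x, ∫⁻ y, ENNReal.ofReal |u y - u x| ∂(m x) ∂ν := by
                rw [← lintegral_const_mul' _ _ ENNReal.ofReal_ne_top]
                exact lintegral_congr fun x =>
                  lintegral_const_mul' _ _ ENNReal.ofReal_ne_top
        exact hbd.trans_lt (ENNReal.mul_lt_top ENNReal.ofReal_lt_top hEu)
      · filter_upwards [hA] with x hx hxA
        have hvx : v k x = 0 := by
          simp only [hv_def]; simp [hx hxA]
        simp only [hw_def, hvx]
        exact Real.zero_rpow (by linarith)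
    -- Lq norm of w
    have hwq : eLpNorm w (ENNReal.ofReal q) ν = (J k) ^ ((1:ℝ)/q) := by
      rw [eLpNorm_eq_lintegral_rpow_enorm_toReal
        (ne_of_gt (ENNReal.ofReal_pos.mpr hq_pos)) ENNReal.ofReal_ne_top,
        ENNReal.toReal_ofReal hq_pos.le]
      simp only [hJ_def]
      congr 1
      refine lintegral_congr fun x => ?_
      rw [← ofReal_norm, Real.norm_eq_abs,
        abs_of_nonneg (hw_nonneg x),
        ENNReal.ofReal_rpow_of_nonneg (hw_nonneg x) hq_pos.le]
      congr 1
      simp only [hw_def]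
      rw [← Real.rpow_mul (hv_nonneg k x), hcq]
    -- measurability of the two factors
    have hF : Measurable (fun z : X × X =>
        ENNReal.ofReal (c * max (v k z.1) (v k z.2) ^ (c - 1))) := by
      refine ENNReal.measurable_ofReal.comp (measurable_const.mul ?_)
      exact (((hv_meas k).comp measurable_fst).max
        ((hv_meas k).comp measurable_snd)).pow_const _
    have hG : Measurable (fun z : X × X => ENNReal.ofReal |u z.2 - u z.1|) :=
      ENNReal.measurable_ofReal.comp
        (((hu.comp measurable_snd).sub (hu.comp measurable_fst)).abs)
    have hψmeas : Measurable (fun y => ENNReal.ofReal (v k y ^ p)) :=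
      ((hv_meas k).pow_const _).ennreal_ofReal
    -- bound the F-square integral
    have hFsq : ∫⁻ x, ∫⁻ y,
        (ENNReal.ofReal (c * max (v k x) (v k y) ^ (c - 1))) ^ (2:ℝ) ∂(m x) ∂ν ≤
          2 * (ENNReal.ofReal (c^2) * J k) := by
      calc ∫⁻ x, ∫⁻ y,
            (ENNReal.ofReal (c * max (v k x) (v k y) ^ (c - 1))) ^ (2:ℝ) ∂(m x) ∂ν
          ≤ ∫⁻ x, ∫⁻ y, ENNReal.ofReal (c^2) *
              (ENNReal.ofReal (v k x ^ p) + ENNReal.ofReal (v k y ^ p)) ∂(m x) ∂ν := by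
            refine lintegral_mono fun x => lintegral_mono fun y => ?_
            have hmax0 : 0 ≤ max (v k x) (v k y) :=
              le_trans (hv_nonneg k x) (le_max_left _ _)
            rw [ENNReal.ofReal_rpow_of_nonneg (by positivity) (by norm_num),
              ← ENNReal.ofReal_add (by positivity) (by positivity),
              ← ENNReal.ofReal_mul (by positivity)]
            refine ENNReal.ofReal_le_ofReal ?_
            have heq : (c * max (v k x) (v k y) ^ (c - 1)) ^ (2:ℝ)
                = c^2 * max (v k x) (v k y) ^ p := by
              rw [Real.mul_rpow hc0 (Real.rpow_nonneg hmax0 _),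
                ← Real.rpow_mul hmax0, h2c, Real.rpow_two]
            rw [heq]
            exact mul_le_mul_of_nonneg_left
              (aux_max_rpow_le (hv_nonneg k x) (hv_nonneg k y)) (by positivity)
        _ = 2 * (ENNReal.ofReal (c^2) * J k) := by
            have hstep : ∀ x, ∫⁻ y, ENNReal.ofReal (c^2) *
                (ENNReal.ofReal (v k x ^ p) + ENNReal.ofReal (v k y ^ p)) ∂(m x)
                  = ENNReal.ofReal (c^2) *
                (ENNReal.ofReal (v k x ^ p) +
                  ∫⁻ y, ENNReal.ofReal (v k y ^ p) ∂(m x)) := by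
              intro x
              rw [lintegral_const_mul' _ _ ENNReal.ofReal_ne_top]
              congr 1
              rw [lintegral_add_right _ hψmeas, lintegral_const,
                (hprob x).measure_univ, mul_one]
            rw [lintegral_congr hstep,
              lintegral_const_mul' _ _ ENNReal.ofReal_ne_top,
              lintegral_add_left hψmeas, hrev' hψmeas]
            simp only [hJ_def]
            ring
    -- the G-square integral
    have hGsq : ∫⁻ x, ∫⁻ y,
        (ENNReal.ofReal |u y - u x|) ^ (2:ℝ) ∂(m x) ∂ν = 2 * Hm m ν u := by
      have h1 : ∫⁻ x, ∫⁻ y,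
          (ENNReal.ofReal |u y - u x|) ^ (2:ℝ) ∂(m x) ∂ν
            = ∫⁻ x, ∫⁻ y, ENNReal.ofReal ((u x - u y) ^ 2) ∂(m x) ∂ν := by
        refine lintegral_congr fun x => lintegral_congr fun y => ?_
        rw [ENNReal.ofReal_rpow_of_nonneg (abs_nonneg _) (by norm_num)]
        congr 1
        rw [Real.rpow_two, sq_abs]
        ring
      rw [h1, Hm, ← mul_assoc, ENNReal.mul_inv_cancel two_ne_zero ENNReal.ofNat_ne_top,
        one_mul]
    -- total variation bound
    have hTVw : TVm m ν w ≤
        ENNReal.ofReal c * ((J k) ^ ((1:ℝ)/2) * (Hm m ν u) ^ ((1:ℝ)/2)) := by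
      have hE2 : nlEnergy m ν w ≤ ∫⁻ x, ∫⁻ y,
          (ENNReal.ofReal (c * max (v k x) (v k y) ^ (c - 1)) *
            ENNReal.ofReal |u y - u x|) ∂(m x) ∂ν := by
        simp only [nlEnergy]
        refine lintegral_mono fun x => lintegral_mono fun y => ?_
        rw [← ENNReal.ofReal_mul (by positivity)]
        exact ENNReal.ofReal_le_ofReal (hw_ptwise x y)
      have hcompFG := hcomp (hF.mul hG)
      have hcompF2 := hcomp (hF.pow_const (2:ℝ))
      have hcompG2 := hcomp (hG.pow_const (2:ℝ))
      have hHolder := ENNReal.lintegral_mul_le_Lp_mul_Lq (ν.compProd κ)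
        Real.HolderConjugate.two_two
        hF.aemeasurable hG.aemeasurable
      have hENw : nlEnergy m ν w ≤
          (2 * (ENNReal.ofReal (c^2) * J k)) ^ ((1:ℝ)/2) *
            (2 * Hm m ν u) ^ ((1:ℝ)/2) := by
        refine le_trans (le_trans hE2 (le_of_eq hcompFG)) ?_
        refine le_trans hHolder ?_
        have hA1 : (∫⁻ z, (fun z : X × X =>
            ENNReal.ofReal (c * max (v k z.1) (v k z.2) ^ (c - 1))) z ^ (2:ℝ)
              ∂(ν.compProd κ)) ≤ 2 * (ENNReal.ofReal (c^2) * J k) :=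
          le_trans (le_of_eq hcompF2.symm) hFsq
        have hA2 : (∫⁻ z, (fun z : X × X =>
            ENNReal.ofReal |u z.2 - u z.1|) z ^ (2:ℝ) ∂(ν.compProd κ))
              = 2 * Hm m ν u :=
          hcompG2.symm.trans hGsq
        rw [hA2]
        exact mul_le_mul_left (ENNReal.rpow_le_rpow hA1 (by norm_num)) _
      calc TVm m ν w = 2⁻¹ * nlEnergy m ν w := rfl
        _ ≤ 2⁻¹ * ((2 * (ENNReal.ofReal (c^2) * J k)) ^ ((1:ℝ)/2) *
              (2 * Hm m ν u) ^ ((1:ℝ)/2)) := mul_le_mul_right hENw _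
        _ = (ENNReal.ofReal (c^2) * J k) ^ ((1:ℝ)/2) *
              (Hm m ν u) ^ ((1:ℝ)/2) := aux_two_half_mul _ _
        _ = ENNReal.ofReal c * ((J k) ^ ((1:ℝ)/2) * (Hm m ν u) ^ ((1:ℝ)/2)) := by
            rw [ENNReal.mul_rpow_of_nonneg _ _ (by norm_num : (0:ℝ) ≤ 1/2)]
            rw [ENNReal.ofReal_rpow_of_nonneg (sq_nonneg c) (by norm_num)]
            rw [← Real.rpow_two, ← Real.rpow_mul hc0]
            norm_num
            rw [mul_assoc]
      -- end of hTVw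
    have hmain : (J k) ^ ((1:ℝ)/q) ≤
        ENNReal.ofReal I *
          (ENNReal.ofReal c * ((J k) ^ ((1:ℝ)/2) * (Hm m ν u) ^ ((1:ℝ)/2))) :=
      calc (J k) ^ ((1:ℝ)/q) = eLpNorm w (ENNReal.ofReal q) ν := hwq.symm
        _ ≤ ENNReal.ofReal I * TVm m ν w := hsob w hwBV
        _ ≤ _ := mul_le_mul_right hTVw _
    -- exponent bookkeeping
    set N : ℝ≥0∞ := (J k) ^ ((1:ℝ)/p) with hN_def
    have hN0 : N ≠ 0 := by
      rw [hN_def]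
      exact (ENNReal.rpow_pos (lt_of_le_of_ne zero_le (Ne.symm hJ0))
        (hJ_fin k)).ne'
    have hNtop : N ≠ ⊤ := by
      rw [hN_def]
      exact ENNReal.rpow_ne_top_of_nonneg (by positivity) (hJ_fin k)
    have hNq : (J k) ^ ((1:ℝ)/q) = N * N ^ (p/2) := by
      have hexp : (1:ℝ)/q = (1/p) * (1 + p/2) := by
        field_simp
        nlinarith [hcq, hcsum]
      rw [hexp, ENNReal.rpow_mul, ← hN_def,
        ENNReal.rpow_add _ _ hN0 hNtop, ENNReal.rpow_one]
    have hNh : (J k) ^ ((1:ℝ)/2) = N ^ (p/2) := by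
      rw [hN_def, ← ENNReal.rpow_mul]
      congr 1
      field_simp
    rw [hNq, hNh] at hmain
    have hre : ENNReal.ofReal I *
        (ENNReal.ofReal c * (N ^ (p/2) * (Hm m ν u) ^ ((1:ℝ)/2)))
          = (ENNReal.ofReal I * ENNReal.ofReal c * (Hm m ν u) ^ ((1:ℝ)/2)) *
            N ^ (p/2) := by ring
    rw [hre] at hmain
    have hNp0 : N ^ (p/2) ≠ 0 :=
      (ENNReal.rpow_pos (lt_of_le_of_ne zero_le (Ne.symm hN0)) hNtop).ne'
    have hNptop : N ^ (p/2) ≠ ⊤ :=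
      ENNReal.rpow_ne_top_of_nonneg (by positivity) hNtop
    have hfin := (ENNReal.mul_le_mul_iff_left hNp0 hNptop).mp hmain
    rw [← ENNReal.ofReal_mul hI.le] at hfin
    exact hfin
  -- pass to the limit
  have hmono : Monotone (fun k : ℕ => fun x => ENNReal.ofReal (v k x ^ p)) := by
    intro k l hkl x
    exact ENNReal.ofReal_le_ofReal (Real.rpow_le_rpow (hv_nonneg k x)
      (min_le_min le_rfl (Nat.cast_le.mpr hkl)) hp_pos.le)
  have hsup : ∫⁻ x, ENNReal.ofReal (|u x| ^ p) ∂ν = ⨆ k, J k := by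
    simp only [hJ_def]
    rw [← lintegral_iSup
      (fun k => ((hv_meas k).pow_const _).ennreal_ofReal) hmono]
    refine lintegral_congr fun x => ?_
    refine le_antisymm ?_ (iSup_le fun k => ENNReal.ofReal_le_ofReal
      (Real.rpow_le_rpow (hv_nonneg k x) (hv_le_abs k x) hp_pos.le))
    have hx : v ⌈|u x|⌉₊ x = |u x| := min_eq_left (Nat.le_ceil _)
    calc ENNReal.ofReal (|u x| ^ p) = ENNReal.ofReal (v ⌈|u x|⌉₊ x ^ p) := by rw [hx]
      _ ≤ ⨆ k, ENNReal.ofReal (v k x ^ p) :=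
          le_iSup (fun k => ENNReal.ofReal (v k x ^ p)) _
  have hNu : eLpNorm u (ENNReal.ofReal p) ν = (⨆ k, J k) ^ ((1:ℝ)/p) := by
    rw [eLpNorm_eq_lintegral_rpow_enorm_toReal
      (ne_of_gt (ENNReal.ofReal_pos.mpr hp_pos)) ENNReal.ofReal_ne_top,
      ENNReal.toReal_ofReal hp_pos.le, ← hsup]
    congr 1
    refine lintegral_congr fun x => ?_
    rw [← ofReal_norm, Real.norm_eq_abs,
      ENNReal.ofReal_rpow_of_nonneg (abs_nonneg _) hp_pos.le]
  have hfinal : eLpNorm u (ENNReal.ofReal p) ν ≤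
      ENNReal.ofReal (I * c) * (Hm m ν u) ^ ((1:ℝ)/2) := by
    rw [hNu]
    have h1 : (⨆ k, J k) ≤
        (ENNReal.ofReal (I * c) * (Hm m ν u) ^ ((1:ℝ)/2)) ^ p := by
      refine iSup_le fun k => ?_
      have h2 := ENNReal.rpow_le_rpow (hNle k) hp_pos.le
      rwa [← ENNReal.rpow_mul, one_div, inv_mul_cancel₀ hp_pos.ne',
        ENNReal.rpow_one] at h2
    calc (⨆ k, J k) ^ ((1:ℝ)/p)
        ≤ ((ENNReal.ofReal (I * c) * (Hm m ν u) ^ ((1:ℝ)/2)) ^ p) ^ ((1:ℝ)/p) :=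
          ENNReal.rpow_le_rpow h1 (by positivity)
      _ = ENNReal.ofReal (I * c) * (Hm m ν u) ^ ((1:ℝ)/2) := by
          rw [← ENNReal.rpow_mul, mul_one_div, div_self hp_pos.ne',
            ENNReal.rpow_one]
  have hsq : (ENNReal.ofReal (I * c) * (Hm m ν u) ^ ((1:ℝ)/2)) ^ 2 ≤
      ENNReal.ofReal (8 * (n - 1) ^ 2 / (n - 2) ^ 2 * I ^ 2) * Hm m ν u := by
    rw [mul_pow]
    have h1 : ((Hm m ν u) ^ ((1:ℝ)/2)) ^ 2 = Hm m ν u := by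
      rw [← ENNReal.rpow_natCast ((Hm m ν u) ^ ((1:ℝ)/2)) 2, ← ENNReal.rpow_mul]
      norm_num
    rw [h1]
    refine mul_le_mul_left ?_ _
    rw [← ENNReal.ofReal_pow (by positivity)]
    refine ENNReal.ofReal_le_ofReal ?_
    have hc2 : c ^ 2 = 4 * (n-1)^2 / (n-2)^2 := by
      rw [hc_def]; field_simp; ring
    have key : 4 * (n-1)^2 / (n-2)^2 ≤ 8 * (n-1)^2 / (n-2)^2 := by
      gcongr
      nlinarith [sq_nonneg (n-1)]
    calc (I * c)^2 = (4 * (n-1)^2/(n-2)^2) * I ^ 2 := by rw [mul_pow, hc2]; ring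
      _ ≤ (8 * (n-1)^2/(n-2)^2) * I ^ 2 :=
          mul_le_mul_of_nonneg_right key (sq_nonneg I)
  calc (eLpNorm u (ENNReal.ofReal p) ν) ^ 2
      ≤ (ENNReal.ofReal (I * c) * (Hm m ν u) ^ ((1:ℝ)/2)) ^ 2 :=
        pow_le_pow_left' hfinal 2
    _ ≤ _ := hsq
end

section
/- Let [X,d,m] be a metric random walk space with an invariant and reversible probability measure ν which is ergodic, and suppose m_x ≪ ν for all x ∈ X. Let q ≥ 1 and let (u_n) ⊂ L^q(X,ν) be a sequence bounded in L¹(X,ν) with lim_{n→∞} ∫_X ∫_X |u_n(y) − u_n(x)|^q dm_x(y) dν(x) = 0. Then there exist λ ∈ ℝ and a subsequence (u_{n_k}) such that u_{n_k}(x) → λ for ν-a.e. x ∈ X, and ‖u_{n_k} − λ‖_{L^q(X, m_x)} → 0 for ν-a.e. x ∈ X. -/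
open MeasureTheory ENNReal Filter Set Topology

/-- If `ν` is an ergodic invariant and reversible probability measure with `m_x ≪ ν`
for all `x`, `q ≥ 1`, and `(u_n) ⊂ L^q(X,ν)` is bounded in `L¹(X,ν)` with
`∫∫ |u_n(y) − u_n(x)|^q dm_x(y) dν(x) → 0`, then there exist `λ ∈ ℝ` and a subsequence
along which `u_n → λ` `ν`-a.e. and `‖u_n − λ‖_{L^q(X,m_x)} → 0` for `ν`-a.e. `x`. -/
theorem poincare_key_lemma
    {X : Type*} [MetricSpace X] [PolishSpace X] [MeasurableSpace X] [BorelSpace X]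
    (m : X → Measure X) (hprob : ∀ x, IsProbabilityMeasure (m x))
    (hker : MeasurableKernel m)
    (ν : Measure X) [IsProbabilityMeasure ν] (hrev : Reversible m ν)
    (herg : ErgodicRW m ν) (habs : ∀ x, m x ≪ ν)
    (q : ℝ) (hq : 1 ≤ q)
    (u : ℕ → X → ℝ) (humeas : ∀ n, Measurable (u n))
    (huq : ∀ n, MemLp (u n) (ENNReal.ofReal q) ν)
    (hbdd : ∃ C : ℝ, ∀ n, eLpNorm (u n) 1 ν ≤ ENNReal.ofReal C)
    (hlim : Tendsto
      (fun n => ∫⁻ x, ∫⁻ y, ENNReal.ofReal (|u n y - u n x| ^ q) ∂(m x) ∂ν)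
      atTop (𝓝 0)) :
    ∃ (lam : ℝ) (φ : ℕ → ℕ), StrictMono φ ∧
      (∀ᵐ x ∂ν, Tendsto (fun k => u (φ k) x) atTop (𝓝 lam)) ∧
      (∀ᵐ x ∂ν, Tendsto
        (fun k => eLpNorm (fun y => u (φ k) y - lam) (ENNReal.ofReal q) (m x))
        atTop (𝓝 0)) := by
  classical
  obtain ⟨C, hC⟩ := hbdd
  have hq0 : (0 : ℝ) < q := lt_of_lt_of_le one_pos hq
  set p := ENNReal.ofReal q with hp
  have hptoReal : p.toReal = q := ENNReal.toReal_ofReal hq0.le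
  have hpne0 : p ≠ 0 := by simp [hp, ENNReal.ofReal_eq_zero, not_le, hq0]
  have hpnetop : p ≠ ⊤ := ENNReal.ofReal_ne_top
  have hm_meas : Measurable (m : X → Measure X) :=
    Measure.measurable_of_measurable_coe _ fun s hs => hker s hs
  let κ : ProbabilityTheory.Kernel X X := ⟨m, hm_meas⟩
  haveI : ProbabilityTheory.IsMarkovKernel κ := ⟨fun x => hprob x⟩
  have hFunc : ∀ n : ℕ, Measurable (Function.uncurry fun x y =>
      ENNReal.ofReal (|u n y - u n x| ^ q)) := by
    intro n
    exact ((((humeas n).comp measurable_snd).sub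
      ((humeas n).comp measurable_fst)).abs.pow measurable_const).ennreal_ofReal
  -- Step 1: extract a subsequence with summable energies
  have hEev : ∀ k : ℕ, ∃ N, ∀ n ≥ N,
      (∫⁻ x, ∫⁻ y, ENNReal.ofReal (|u n y - u n x| ^ q) ∂(m x) ∂ν) ≤ 2⁻¹ ^ k := by
    intro k
    exact ENNReal.tendsto_atTop_zero.mp hlim (2⁻¹ ^ k)
      (ENNReal.pow_pos (by norm_num) k)
  obtain ⟨φ₀, hφ₀mono, hφ₀⟩ := extraction_forall_of_eventually' hEev
  set v : ℕ → X → ℝ := fun k => u (φ₀ k) with hv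
  set I : ℕ → X → ℝ≥0∞ :=
    fun k x => ∫⁻ y, ENNReal.ofReal (|v k y - v k x| ^ q) ∂(m x) with hI
  have hImeas : ∀ k, Measurable (I k) := fun k =>
    Measurable.lintegral_kernel_prod_right (κ := κ) (hFunc (φ₀ k))
  set G : X → ℝ≥0∞ := fun x => ∑' k, I k x with hG
  have hGmeas : Measurable G := Measurable.ennreal_tsum hImeas
  have hGint : ∫⁻ x, G x ∂ν ≠ ⊤ := by
    rw [hG, lintegral_tsum fun k => (hImeas k).aemeasurable]
    refine ne_top_of_le_ne_top (b := ∑' k : ℕ, (2 : ℝ≥0∞)⁻¹ ^ k) ?_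
      (ENNReal.tsum_le_tsum fun k => hφ₀ k)
    rw [ENNReal.tsum_geometric]
    simp [ENNReal.one_sub_inv_two]
  have hGae : ∀ᵐ x ∂ν, G x < ⊤ := ae_lt_top hGmeas hGint
  -- pointwise consequences of `G x < ⊤`
  have hpt : ∀ x, G x < ⊤ →
      Tendsto (fun k => I k x) atTop (𝓝 0) ∧
      ∀ᵐ y ∂(m x), Tendsto (fun k => v k y - v k x) atTop (𝓝 0) := by
    intro x hx
    constructor
    · exact ENNReal.tendsto_atTop_zero_of_tsum_ne_top hx.ne
    · have hymeas : ∀ k, Measurable fun y =>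
          ENNReal.ofReal (|v k y - v k x| ^ q) := fun k =>
        (((humeas (φ₀ k)).sub_const _).abs.pow measurable_const).ennreal_ofReal
      have hint : ∫⁻ y, ∑' k, ENNReal.ofReal (|v k y - v k x| ^ q) ∂(m x) ≠ ⊤ := by
        rw [lintegral_tsum fun k => (hymeas k).aemeasurable]
        exact hx.ne
      filter_upwards [ae_lt_top (Measurable.ennreal_tsum hymeas) hint] with y hy
      have h2 : Tendsto (fun k => ENNReal.ofReal (|v k y - v k x| ^ q)) atTop (𝓝 0) :=
        ENNReal.tendsto_atTop_zero_of_tsum_ne_top hy.ne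
      have h3 : Tendsto (fun k => |v k y - v k x| ^ q) atTop (𝓝 0) := by
        have h3' : Tendsto (fun k =>
            (ENNReal.ofReal (|v k y - v k x| ^ q)).toReal) atTop (𝓝 0) := by
          have h3'' := (ENNReal.tendsto_toReal (by simp)).comp h2
          simpa [Function.comp_def] using h3''
        exact h3'.congr fun k =>
          ENNReal.toReal_ofReal (Real.rpow_nonneg (abs_nonneg _) q)
      have h4 : Tendsto (fun k => |v k y - v k x|) atTop (𝓝 0) := by
        have hc : ContinuousAt (fun z : ℝ => z ^ q⁻¹) 0 :=
          Real.continuousAt_rpow_const 0 q⁻¹ (Or.inr (by positivity))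
        have h5 := hc.tendsto.comp h3
        rw [Real.zero_rpow (by positivity : q⁻¹ ≠ (0 : ℝ))] at h5
        exact h5.congr fun k =>
          Real.rpow_rpow_inv (abs_nonneg _) (by positivity : q ≠ 0)
      exact (tendsto_zero_iff_abs_tendsto_zero _).mpr h4
  -- liminf of |v k| is a.e. finite
  set F : X → ℝ≥0∞ := fun x => liminf (fun k => ENNReal.ofReal |v k x|) atTop with hF
  have hFm : Measurable F :=
    Measurable.liminf fun k => (humeas (φ₀ k)).abs.ennreal_ofReal
  have hFint : ∫⁻ x, F x ∂ν ≠ ⊤ := by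
    refine ne_top_of_le_ne_top (b := ENNReal.ofReal C) ENNReal.ofReal_ne_top ?_
    calc ∫⁻ x, F x ∂ν
        ≤ liminf (fun k => ∫⁻ x, ENNReal.ofReal |v k x| ∂ν) atTop :=
          lintegral_liminf_le fun k => (humeas (φ₀ k)).abs.ennreal_ofReal
      _ ≤ ENNReal.ofReal C := by
          refine liminf_le_of_frequently_le (Frequently.of_forall fun k => ?_)
          have hE : ∫⁻ x, ENNReal.ofReal |v k x| ∂ν = eLpNorm (v k) 1 ν := by
            rw [eLpNorm_one_eq_lintegral_enorm]
            simp_rw [Real.enorm_eq_ofReal_abs]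
          rw [hE]
          exact hC _
  have hFae : ∀ᵐ x ∂ν, F x < ⊤ := ae_lt_top hFm hFint
  -- choose a good point x₀
  have hν0 : ν ≠ 0 := IsProbabilityMeasure.ne_zero ν
  haveI : (ae ν).NeBot := ae_neBot.mpr hν0
  obtain ⟨x₀, hGx₀, hFx₀⟩ := (hGae.and hFae).exists
  -- Bolzano–Weierstrass at x₀
  have hfreq : ∃ᶠ k in atTop, ENNReal.ofReal |v k x₀| < F x₀ + 1 :=
    frequently_lt_of_liminf_lt (h := ENNReal.lt_add_right hFx₀.ne one_ne_zero)
  obtain ⟨ψ₁, hψ₁mono, hψ₁⟩ := extraction_of_frequently_atTop hfreq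
  set R := (F x₀ + 1).toReal with hR
  have hFx₀top : F x₀ + 1 ≠ ⊤ := ENNReal.add_ne_top.mpr ⟨hFx₀.ne, ENNReal.one_ne_top⟩
  have hvbd : ∀ j, |v (ψ₁ j) x₀| ≤ R := by
    intro j
    have h2 := ENNReal.toReal_mono hFx₀top (hψ₁ j).le
    rwa [ENNReal.toReal_ofReal (abs_nonneg _)] at h2
  obtain ⟨lam, -, ψ₂, hψ₂mono, hlam⟩ :=
    tendsto_subseq_of_bounded (Metric.isBounded_Icc (-R) R)
      (x := fun j => v (ψ₁ j) x₀)
      (fun j => Set.mem_Icc.mpr (abs_le.mp (hvbd j)))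
  set ψ : ℕ → ℕ := ψ₁ ∘ ψ₂ with hψ
  have hψmono : StrictMono ψ := hψ₁mono.comp hψ₂mono
  set φ : ℕ → ℕ := φ₀ ∘ ψ with hφdef
  have hφmono : StrictMono φ := hφ₀mono.comp hψmono
  -- the set of convergence
  set D : Set X := {x | G x < ⊤} with hD
  set B : Set X := D ∩ {x | Tendsto (fun j => v (ψ j) x) atTop (𝓝 lam)} with hBdef
  have hBmeas : MeasurableSet B := by
    refine (measurableSet_lt hGmeas measurable_const).inter ?_
    exact measurableSet_tendsto (𝓝 lam) fun j => humeas (φ₀ (ψ j))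
  have hDc : ν Dᶜ = 0 := by
    rw [hD]
    simpa only [ae_iff, Set.compl_setOf, not_lt, top_le_iff] using hGae
  have hB1 : ∀ x ∈ B, m x B = 1 := by
    intro x hx
    haveI := hprob x
    have hDy : ∀ᵐ y ∂(m x), y ∈ D := by
      have hz : m x Dᶜ = 0 := habs x hDc
      rw [ae_iff]
      exact hz
    have hmem : ∀ᵐ y ∂(m x), y ∈ B := by
      filter_upwards [hDy, (hpt x hx.1).2] with y hyD hyT
      refine ⟨hyD, ?_⟩
      have h1 : Tendsto (fun j => v (ψ j) y - v (ψ j) x) atTop (𝓝 0) :=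
        hyT.comp hψmono.tendsto_atTop
      have h2 : Tendsto (fun j => v (ψ j) x) atTop (𝓝 lam) := hx.2
      simpa using h1.add h2
    have hcompl : m x Bᶜ = 0 := by
      exact ae_iff.mp hmem
    exact (prob_compl_eq_zero_iff hBmeas).mp hcompl
  have hx₀B : x₀ ∈ B := ⟨hGx₀, hlam⟩
  have hνB : ν B = 1 := by
    rcases herg B hBmeas hB1 with h | h
    · exact absurd ((habs x₀ h).symm.trans (hB1 x₀ hx₀B)) zero_ne_one
    · exact h
  have haeB : ∀ᵐ x ∂ν, x ∈ B := by
    have hcompl : ν Bᶜ = 0 := (prob_compl_eq_zero_iff hBmeas).mpr hνB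
    exact ae_iff.mpr hcompl
  refine ⟨lam, φ, hφmono, ?_, ?_⟩
  · filter_upwards [haeB] with x hx using hx.2
  · filter_upwards [haeB] with x hx
    haveI := hprob x
    have hI0 : Tendsto (fun k => I (ψ k) x) atTop (𝓝 0) :=
      ((hpt x hx.1).1).comp hψmono.tendsto_atTop
    have hAk : Tendsto
        (fun k => eLpNorm (fun y => v (ψ k) y - v (ψ k) x) p (m x)) atTop (𝓝 0) := by
      have heq : ∀ k, eLpNorm (fun y => v (ψ k) y - v (ψ k) x) p (m x)
          = (I (ψ k) x) ^ (1 / q) := by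
        intro k
        rw [eLpNorm_eq_lintegral_rpow_enorm_toReal hpne0 hpnetop, hptoReal]
        congr 1
        refine lintegral_congr fun y => ?_
        rw [Real.enorm_eq_ofReal_abs,
          ← ENNReal.ofReal_rpow_of_nonneg (abs_nonneg _) hq0.le]
      simp only [heq]
      have h6 := hI0.ennrpow_const (1 / q)
      simpa [one_div, ENNReal.zero_rpow_of_pos (by positivity : (0 : ℝ) < q⁻¹)] using h6
    have hck : Tendsto (fun k => v (ψ k) x - lam) atTop (𝓝 0) := by
      simpa using hx.2.sub_const lam
    have hBk : Tendsto
        (fun k => eLpNorm (fun _ : X => v (ψ k) x - lam) p (m x)) atTop (𝓝 0) := by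
      have heq : ∀ k, eLpNorm (fun _ : X => v (ψ k) x - lam) p (m x)
          = ENNReal.ofReal |v (ψ k) x - lam| := by
        intro k
        rw [eLpNorm_const _ hpne0 (IsProbabilityMeasure.ne_zero (m x))]
        simp [Real.enorm_eq_ofReal_abs]
      simp only [heq]
      have habs0 : Tendsto (fun k => |v (ψ k) x - lam|) atTop (𝓝 0) := by
        simpa using hck.abs
      simpa using ENNReal.tendsto_ofReal habs0
    have htri : ∀ k, eLpNorm (fun y => u (φ k) y - lam) p (m x)
        ≤ eLpNorm (fun y => v (ψ k) y - v (ψ k) x) p (m x)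
          + eLpNorm (fun _ : X => v (ψ k) x - lam) p (m x) := by
      intro k
      have hfg : (fun y => u (φ k) y - lam)
          = (fun y => v (ψ k) y - v (ψ k) x) + fun _ : X => v (ψ k) x - lam := by
        funext y
        show u (φ₀ (ψ k)) y - lam = _
        simp only [Pi.add_apply]
        ring
      rw [hfg]
      exact eLpNorm_add_le ((humeas _).sub_const _).aestronglyMeasurable
        aestronglyMeasurable_const (by rw [hp]; exact ENNReal.one_le_ofReal.mpr hq)
    have hsum : Tendsto (fun k =>
        eLpNorm (fun y => v (ψ k) y - v (ψ k) x) p (m x)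
          + eLpNorm (fun _ : X => v (ψ k) x - lam) p (m x)) atTop (𝓝 0) := by
      simpa using hAk.add hBk
    exact tendsto_of_tendsto_of_tendsto_of_le_of_le tendsto_const_nhds hsum
      (fun k => zero_le) htri
end
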